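/- arXiv:1902.10564 — 3 statements merged into one kernel-verified Lean document; each statement's English description precedes it below -/
import Mathlib

section
/- Assume G is a finitely generated subgroup of diff^{1+Lip}(K) containing no free subsemigroup on two generators, and G_1 is a finite-index subgroup of G such that every minimal invariant set of the action of G_1 on K is a singleton consisting of a point of Fix(G_1), and g'(p) > 0 for every g ∈ G_1 and every p ∈ Fix(G_1). Let p ∈ Fix(G_1) be isolated on the left in Fix(G_1) but accumulated on the left by K. Then there exist h ∈ G_1 and α > 0 such that h is increasing on [p−α, p] and h(x) > x for every x ∈ [p−α, p) ∩ K. -/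
open Set

/-- `K` is a Cantor set in `ℝ`: nonempty, compact, totally disconnected, perfect. -/
def IsCantorInR (K : Set ℝ) : Prop :=
  K.Nonempty ∧ IsCompact K ∧ IsTotallyDisconnected K ∧ Perfect K

open Classical in
/-- Apply a permutation of `K` to a real number (identity outside `K`). -/
noncomputable def apK (K : Set ℝ) (f : Equiv.Perm K) (y : ℝ) : ℝ :=
  if h : y ∈ K then (f ⟨y, h⟩ : ℝ) else y

/-- `f` locally coincides with a `C¹` embedding of an open interval with
nowhere-vanishing derivative. -/
def IsD1 (K : Set ℝ) (f : Equiv.Perm K) : Prop :=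
  ∀ x : K, ∃ a b : ℝ, (x : ℝ) ∈ Set.Ioo a b ∧
    ∃ F F' : ℝ → ℝ,
      (∀ y ∈ Set.Ioo a b, HasDerivAt F (F' y) y ∧ F' y ≠ 0) ∧
      ContinuousOn F' (Set.Ioo a b) ∧
      Set.InjOn F (Set.Ioo a b) ∧
      (∀ y : ℝ, y ∈ Set.Ioo a b → y ∈ K → F y = apK K f y)

/-- `f` locally coincides with a `C¹` embedding of an open interval with
nowhere-vanishing derivative whose log-derivative is Lipschitz. -/
def IsD1Lip (K : Set ℝ) (f : Equiv.Perm K) : Prop :=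
  ∀ x : K, ∃ a b : ℝ, (x : ℝ) ∈ Set.Ioo a b ∧
    ∃ F F' : ℝ → ℝ,
      (∀ y ∈ Set.Ioo a b, HasDerivAt F (F' y) y ∧ F' y ≠ 0) ∧
      ContinuousOn F' (Set.Ioo a b) ∧
      Set.InjOn F (Set.Ioo a b) ∧
      (∃ C : NNReal, LipschitzOnWith C (fun y => Real.log |F' y|) (Set.Ioo a b)) ∧
      (∀ y : ℝ, y ∈ Set.Ioo a b → y ∈ K → F y = apK K f y)

/-- membership in `diff¹(K)`: a homeomorphism of `K` locally coinciding
with `C¹` diffeomorphisms of intervals of `ℝ`. -/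
def MemDiff1 (K : Set ℝ) (f : Equiv.Perm K) : Prop :=
  Continuous (fun x : K => f x) ∧ Continuous (fun x : K => f.symm x) ∧ IsD1 K f

/-- membership in `diff^{1+Lip}(K)`. -/
def MemDiffLip (K : Set ℝ) (f : Equiv.Perm K) : Prop :=
  Continuous (fun x : K => f x) ∧ Continuous (fun x : K => f.symm x) ∧ IsD1Lip K f

/-- The derivative of `f` at `x`, as a limit of difference quotients within `K`. -/
def HasDerivOnK (K : Set ℝ) (f : Equiv.Perm K) (x d : ℝ) : Prop :=
  Filter.Tendsto (fun y : ℝ => (apK K f y - apK K f x) / (y - x))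
    (nhdsWithin x (K \ {x})) (nhds d)

/-- `f` is increasing on the interval `I`: it coincides on `I ∩ K` with an
increasing `C¹` diffeomorphism of `I` onto an interval of `ℝ`. -/
def IncreasingOnK (K : Set ℝ) (f : Equiv.Perm K) (I : Set ℝ) : Prop :=
  ∃ F F' : ℝ → ℝ,
    StrictMonoOn F I ∧
    (∀ y ∈ I, HasDerivWithinAt F (F' y) I y ∧ 0 < F' y) ∧
    ContinuousOn F' I ∧
    (∀ y ∈ I, y ∈ K → F y = apK K f y)

/-- `A` is invariant under the subgroup `G`. -/
def IsInvariantSet (K : Set ℝ) (G : Subgroup (Equiv.Perm K)) (A : Set ℝ) : Prop :=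
  ∀ g ∈ G, ∀ x ∈ A, apK K g x ∈ A

/-- `A` is a minimal invariant set for the action of `G` on `K`. -/
def IsMinimalInvariantSet (K : Set ℝ) (G : Subgroup (Equiv.Perm K)) (A : Set ℝ) : Prop :=
  A.Nonempty ∧ A ⊆ K ∧ IsClosed A ∧ IsInvariantSet K G A ∧
    ∀ B : Set ℝ, B.Nonempty → B ⊆ A → IsClosed B → IsInvariantSet K G B → B = A

/-- The set of points of `K` fixed by every element of `H`. -/
def fixedSet (K : Set ℝ) (H : Subgroup (Equiv.Perm K)) : Set ℝ :=
  {x | x ∈ K ∧ ∀ g ∈ H, apK K g x = x}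

/-- `a, b` generate a free subsemigroup: distinct nonempty positive words in
`a` and `b` define distinct elements. -/
def IsFreePair {M : Type*} [Monoid M] (a b : M) : Prop :=
  ∀ w₁ w₂ : List Bool, w₁ ≠ [] → w₂ ≠ [] →
    (w₁.map (fun t => if t then a else b)).prod = (w₂.map (fun t => if t then a else b)).prod →
    w₁ = w₂

/-- `G` contains no free subsemigroup on two generators. -/
def HasNoFreeSubsemigroup {Γ : Type*} [Group Γ] (G : Subgroup Γ) : Prop :=
  ¬ ∃ a ∈ G, ∃ b ∈ G, IsFreePair a b

/-- `p` is accumulated on the left by `A`. -/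
def AccLeft (p : ℝ) (A : Set ℝ) : Prop := ∀ α > 0, (Set.Ico (p - α) p ∩ A).Nonempty

/-- `p` is accumulated on the right by `A`. -/
def AccRight (p : ℝ) (A : Set ℝ) : Prop := ∀ α > 0, (Set.Ioc p (p + α) ∩ A).Nonempty

namespace NFPL

variable {K : Set ℝ}

theorem apK_mem (f : Equiv.Perm K) {y : ℝ} (hy : y ∈ K) : apK K f y ∈ K := by
  rw [apK, dif_pos hy]; exact (f ⟨y, hy⟩).2

theorem apK_apply (f : Equiv.Perm K) {y : ℝ} (hy : y ∈ K) :
    apK K f y = (f ⟨y, hy⟩ : ℝ) := dif_pos hy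

theorem apK_one (y : ℝ) : apK K (1 : Equiv.Perm K) y = y := by
  by_cases hy : y ∈ K
  · rw [apK, dif_pos hy]; rfl
  · rw [apK, dif_neg hy]

theorem apK_mul (f g : Equiv.Perm K) (y : ℝ) :
    apK K (f * g) y = apK K f (apK K g y) := by
  by_cases hy : y ∈ K
  · rw [apK_apply (f * g) hy, apK_apply g hy, apK_apply f (g ⟨y, hy⟩).2]
    simp [Equiv.Perm.mul_apply]
  · have h1 : apK K g y = y := dif_neg hy
    rw [h1]
    unfold apK
    rw [dif_neg hy, dif_neg hy]

theorem apK_inv_apK (f : Equiv.Perm K) (y : ℝ) :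
    apK K f⁻¹ (apK K f y) = y := by
  rw [← apK_mul, inv_mul_cancel, apK_one]

theorem apK_apK_inv (f : Equiv.Perm K) (y : ℝ) :
    apK K f (apK K f⁻¹ y) = y := by
  rw [← apK_mul, mul_inv_cancel, apK_one]

theorem apK_fix_inv (f : Equiv.Perm K) {y : ℝ} (h : apK K f y = y) :
    apK K f⁻¹ y = y := by
  conv_lhs => rw [← h]
  exact apK_inv_apK f y

theorem apK_pow_succ (f : Equiv.Perm K) (n : ℕ) (y : ℝ) :
    apK K (f ^ (n + 1)) y = apK K f (apK K (f ^ n) y) := by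
  rw [pow_succ', apK_mul]

/-- Ping-pong lemma for positive words. -/
theorem pingpong (φ ψ : Equiv.Perm K) (A B : Set ℝ)
    (hA : A.Nonempty) (hB : B.Nonempty)
    (hdisj : ∀ x, x ∈ A → x ∈ B → False)
    (hφ : ∀ x ∈ A ∪ B, apK K φ x ∈ A)
    (hψ : ∀ x ∈ A ∪ B, apK K ψ x ∈ B) :
    IsFreePair φ ψ := by
  have img : ∀ w : List Bool, w ≠ [] → ∀ x ∈ A ∪ B,
      apK K ((w.map (fun t => if t then φ else ψ)).prod) x ∈
        (if w.head! then A else B) := by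
    intro w
    induction w with
    | nil => intro h; exact absurd rfl h
    | cons t r ih =>
      intro _ x hx
      rw [List.map_cons, List.prod_cons, apK_mul]
      have hin : apK K ((r.map (fun t => if t then φ else ψ)).prod) x ∈ A ∪ B := by
        rcases eq_or_ne r [] with hr | hr
        · subst hr; simpa [apK_one] using hx
        · have := ih hr x hx
          rcases Bool.eq_false_or_eq_true r.head! with h | h <;> rw [h] at this <;>
            simp at this
          · exact Or.inl this
          · exact Or.inr this
      cases t
      · simpa using hψ _ hin
      · simpa using hφ _ hin
  intro w₁ w₂ h1 h2 heq
  obtain ⟨a₀, ha₀⟩ := hA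
  obtain ⟨b₀, hb₀⟩ := hB
  induction w₁ generalizing w₂ with
  | nil => exact absurd rfl h1
  | cons t r ih =>
    rcases w₂ with _ | ⟨t₂, r₂⟩
    · exact absurd rfl h2
    have hhd : t = t₂ := by
      by_contra hne
      have H1 := img (t :: r) (List.cons_ne_nil _ _) a₀ (Or.inl ha₀)
      have H2 := img (t₂ :: r₂) (List.cons_ne_nil _ _) a₀ (Or.inl ha₀)
      rw [heq] at H1
      cases t <;> cases t₂ <;> simp at H1 H2 <;>
        first
          | exact hne rfl
          | exact hdisj _ H2 H1
          | exact hdisj _ H1 H2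
    subst hhd
    have heq' : ((r.map (fun t => if t then φ else ψ)).prod) =
        ((r₂.map (fun t => if t then φ else ψ)).prod) := by
      rw [List.map_cons, List.prod_cons, List.map_cons, List.prod_cons] at heq
      exact mul_left_cancel heq
    have hone_absurd : ∀ w : List Bool, w ≠ [] →
        ((w.map (fun t => if t then φ else ψ)).prod) = 1 → False := by
      intro w hw hone
      rcases Bool.eq_false_or_eq_true w.head! with h | h
      · have := img w hw b₀ (Or.inr hb₀)
        rw [h, hone] at this
        simp only [apK_one, if_true] at this
        exact hdisj _ this hb₀
      · have := img w hw a₀ (Or.inl ha₀)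
        rw [h, hone] at this
        simp only [apK_one, if_false] at this
        exact hdisj _ ha₀ this
    rcases eq_or_ne r [] with hr | hr
    · rcases eq_or_ne r₂ [] with hr2 | hr2
      · subst hr; subst hr2; rfl
      · exact absurd (by simpa [hr] using heq'.symm) (fun h => hone_absurd r₂ hr2 h)
    · rcases eq_or_ne r₂ [] with hr2 | hr2
      · exact absurd (by simpa [hr2] using heq') (fun h => hone_absurd r hr h)
      · rw [ih r₂ hr hr2 heq']

end NFPL
namespace NFPL

variable {K : Set ℝ}

theorem cpt_gen (hKcp : IsCompact K) (f : Equiv.Perm K)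
    (hfc : Continuous fun x : K => ((f x : ℝ))) (l r : ℝ)
    (Q : ℝ → ℝ → Prop) (hQ : IsClosed {q : ℝ × ℝ | Q q.1 q.2}) :
    IsCompact {y : ℝ | y ∈ K ∧ y ∈ Set.Icc l r ∧ Q y (apK K f y)} := by
  haveI : CompactSpace ↥K := isCompact_iff_compactSpace.mp hKcp
  have hT : IsClosed {x : ↥K | (x : ℝ) ∈ Set.Icc l r ∧ Q (x : ℝ) ((f x : ℝ))} := by
    have h1 : IsClosed {x : ↥K | (x : ℝ) ∈ Set.Icc l r} :=
      isClosed_Icc.preimage continuous_subtype_val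
    have h2 : IsClosed {x : ↥K | Q (x : ℝ) ((f x : ℝ))} :=
      hQ.preimage (continuous_subtype_val.prodMk hfc)
    exact (h1.inter h2)
  have himg := (hT.isCompact).image continuous_subtype_val
  convert himg using 1
  ext y
  constructor
  · rintro ⟨hyK, h1, h2⟩
    exact ⟨⟨y, hyK⟩, ⟨h1, by rwa [← apK_apply f hyK]⟩, rfl⟩
  · rintro ⟨x, ⟨h1, h2⟩, rfl⟩
    exact ⟨x.2, h1, by rwa [apK_apply f x.2]⟩

/-- Lemma A : a point with `f ≥ id` to the left of a point with `f ≤ id`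
produces a fixed point in `K` in between. -/
theorem lemA (hKcp : IsCompact K) (f : Equiv.Perm K)
    (hfc : Continuous fun x : K => ((f x : ℝ)))
    (x₁ x₂ : ℝ) (h1K : x₁ ∈ K) (h2K : x₂ ∈ K) (h12 : x₁ ≤ x₂)
    (hmono : ∀ x ∈ K, ∀ y ∈ K, x₁ ≤ x → x < y → y ≤ x₂ → apK K f x < apK K f y)
    (hl : x₁ ≤ apK K f x₁) (hr : apK K f x₂ ≤ x₂) :
    ∃ z, z ∈ K ∧ x₁ ≤ z ∧ z ≤ x₂ ∧ apK K f z = z := by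
  have hCcp : IsCompact {y : ℝ | y ∈ K ∧ y ∈ Set.Icc x₁ x₂ ∧ y ≤ apK K f y} :=
    cpt_gen hKcp f hfc x₁ x₂ (fun a b => a ≤ b) (isClosed_le continuous_fst continuous_snd)
  have hCne : Set.Nonempty {y : ℝ | y ∈ K ∧ y ∈ Set.Icc x₁ x₂ ∧ y ≤ apK K f y} :=
    ⟨x₁, h1K, ⟨le_refl _, h12⟩, hl⟩
  obtain ⟨hzK, ⟨hzx₁, hzx₂⟩, hzle⟩ := hCcp.sSup_mem hCne
  set z := sSup {y : ℝ | y ∈ K ∧ y ∈ Set.Icc x₁ x₂ ∧ y ≤ apK K f y} with hz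
  rcases eq_or_lt_of_le hzle with heq | hlt
  · exact ⟨z, hzK, hzx₁, hzx₂, heq.symm⟩
  exfalso
  have hC'cp : IsCompact {y : ℝ | y ∈ K ∧ y ∈ Set.Icc z x₂ ∧ apK K f y ≤ y} :=
    cpt_gen hKcp f hfc z x₂ (fun a b => b ≤ a) (isClosed_le continuous_snd continuous_fst)
  have hC'ne : Set.Nonempty {y : ℝ | y ∈ K ∧ y ∈ Set.Icc z x₂ ∧ apK K f y ≤ y} :=
    ⟨x₂, h2K, ⟨hzx₂, le_refl _⟩, hr⟩
  obtain ⟨hz'K, ⟨hz'z, hz'x₂⟩, hz'le⟩ := hC'cp.sInf_mem hC'ne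
  set z' := sInf {y : ℝ | y ∈ K ∧ y ∈ Set.Icc z x₂ ∧ apK K f y ≤ y} with hz'
  have hzz' : z < z' := by
    rcases eq_or_lt_of_le hz'z with heq | h
    · exfalso; rw [← heq] at hz'le; exact absurd hz'le (not_le.mpr hlt)
    · exact h
  have hgap : ∀ t, t ∈ K → z < t → t < z' → False := by
    intro t htK ht1 ht2
    have htx₂ : t ≤ x₂ := le_of_lt (lt_of_lt_of_le ht2 hz'x₂)
    have htx₁ : x₁ ≤ t := le_trans hzx₁ (le_of_lt ht1)
    by_cases hle : t ≤ apK K f t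
    · have : t ≤ z := le_csSup hCcp.bddAbove ⟨htK, ⟨htx₁, htx₂⟩, hle⟩
      exact absurd ht1 (not_lt.mpr this)
    · have : z' ≤ t := csInf_le hC'cp.bddBelow ⟨htK, ⟨le_of_lt ht1, htx₂⟩, le_of_not_ge hle⟩
      exact absurd ht2 (not_lt.mpr this)
  have h2' : apK K f z < z' := by
    have h := hmono z hzK z' hz'K hzx₁ hzz' hz'x₂
    exact lt_of_lt_of_le h hz'le
  exact hgap (apK K f z) (apK_mem f hzK) hlt h2'

/-- Gaps have constant sign. -/
theorem sign_const (hKcp : IsCompact K) (f : Equiv.Perm K)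
    (hfc : Continuous fun x : K => ((f x : ℝ)))
    (hfc' : Continuous fun x : K => ((f⁻¹ x : ℝ)))
    (a b : ℝ) (haK : a ∈ K) (hbK : b ∈ K)
    (hmono : ∀ x ∈ K, ∀ y ∈ K, a ≤ x → x < y → y ≤ b → apK K f x < apK K f y)
    (hmonoInv : ∀ x ∈ K, ∀ y ∈ K, a ≤ x → x < y → y ≤ b → apK K f⁻¹ x < apK K f⁻¹ y)
    (hfa : apK K f a = a) (hfb : apK K f b = b)
    (hgap : ∀ t, t ∈ K → a < t → t < b → apK K f t ≠ t)
    (t₁ : ℝ) (ht₁K : t₁ ∈ K) (hat₁ : a < t₁) (ht₁b : t₁ < b) (hsgn : t₁ < apK K f t₁) :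
    ∀ t, t ∈ K → a < t → t < b → t < apK K f t := by
  intro t htK hat htb
  rcases lt_trichotomy (apK K f t) t with hlt | heq | hgt
  · exfalso
    rcases lt_trichotomy t t₁ with htt₁ | rfl | ht₁t
    · -- use f⁻¹ on [t, t₁]
      have hinv_t : t < apK K f⁻¹ t := by
        have hrK : apK K f t ∈ K := apK_mem f htK
        have hra : a < apK K f t := by
          have := hmono a haK t htK (le_refl _) hat (le_of_lt htb)
          rwa [hfa] at this
        have := hmonoInv (apK K f t) hrK t htK (le_of_lt hra) hlt (le_of_lt htb)
        rwa [apK_inv_apK] at this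
      have hinv_t₁ : apK K f⁻¹ t₁ < t₁ := by
        have hr₁K : apK K f t₁ ∈ K := apK_mem f ht₁K
        have hr₁b : apK K f t₁ < b := by
          have := hmono t₁ ht₁K b hbK (le_of_lt hat₁) ht₁b (le_refl _)
          rwa [hfb] at this
        have := hmonoInv t₁ ht₁K (apK K f t₁) hr₁K (le_of_lt hat₁) hsgn (le_of_lt hr₁b)
        rwa [apK_inv_apK] at this
      obtain ⟨z, hzK, hz1, hz2, hzfix⟩ :=
        lemA hKcp f⁻¹ hfc' t t₁ htK ht₁K (le_of_lt htt₁)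
          (fun x hx y hy h1 h2 h3 =>
            hmonoInv x hx y hy (le_trans (le_of_lt hat) h1) h2 (le_trans h3 (le_of_lt ht₁b)))
          (le_of_lt hinv_t) (le_of_lt hinv_t₁)
      have hzfixf : apK K f z = z := by
        conv_lhs => rw [← hzfix]
        exact apK_apK_inv f z
      exact hgap z hzK (lt_of_lt_of_le hat hz1) (lt_of_le_of_lt hz2 ht₁b) hzfixf
    · exact absurd hsgn (not_lt.mpr (le_of_lt hlt))
    · obtain ⟨z, hzK, hz1, hz2, hzfix⟩ :=
        lemA hKcp f hfc t₁ t ht₁K htK (le_of_lt ht₁t)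
          (fun x hx y hy h1 h2 h3 =>
            hmono x hx y hy (le_trans (le_of_lt hat₁) h1) h2 (le_trans h3 (le_of_lt htb)))
          (le_of_lt hsgn) (le_of_lt hlt)
      exact hgap z hzK (lt_of_lt_of_le hat₁ hz1) (lt_of_le_of_lt hz2 htb) hzfix
  · exact absurd heq (hgap t htK hat htb)
  · exact hgt

end NFPL
namespace NFPL

variable {K : Set ℝ}

section GapDyn

variable (u : Equiv.Perm K) (a b : ℝ)

/-- Interior of a positive gap is preserved by powers. -/
theorem pow_interior
    (haK : a ∈ K) (hbK : b ∈ K)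
    (hmono : ∀ x ∈ K, ∀ y ∈ K, a ≤ x → x < y → y ≤ b → apK K u x < apK K u y)
    (hua : apK K u a = a) (hub : apK K u b = b) (n : ℕ) :
    ∀ x, x ∈ K → a < x → x < b →
      apK K (u ^ n) x ∈ K ∧ a < apK K (u ^ n) x ∧ apK K (u ^ n) x < b := by
  induction n with
  | zero => intro x hx h1 h2; simpa [pow_zero, apK_one] using ⟨hx, h1, h2⟩
  | succ n ih =>
    intro x hx h1 h2
    obtain ⟨hK', h1', h2'⟩ := ih x hx h1 h2
    rw [apK_pow_succ]
    refine ⟨apK_mem u hK', ?_, ?_⟩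
    · have := hmono a haK _ hK' (le_refl _) h1' (le_of_lt h2')
      rwa [hua] at this
    · have := hmono _ hK' b hbK (le_of_lt h1') h2' (le_refl _)
      rwa [hub] at this

theorem pow_mem
    (haK : a ∈ K) (hbK : b ∈ K)
    (hmono : ∀ x ∈ K, ∀ y ∈ K, a ≤ x → x < y → y ≤ b → apK K u x < apK K u y)
    (hua : apK K u a = a) (hub : apK K u b = b) (n : ℕ) :
    ∀ x, x ∈ K → a ≤ x → x ≤ b →
      apK K (u ^ n) x ∈ K ∧ a ≤ apK K (u ^ n) x ∧ apK K (u ^ n) x ≤ b := by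
  induction n with
  | zero => intro x hx h1 h2; simpa [pow_zero, apK_one] using ⟨hx, h1, h2⟩
  | succ n ih =>
    intro x hx h1 h2
    obtain ⟨c1, c2, c3⟩ := ih x hx h1 h2
    rw [apK_pow_succ]
    refine ⟨apK_mem u c1, ?_, ?_⟩
    · rcases eq_or_lt_of_le c2 with heq | h
      · rw [← heq, hua]
      · have := hmono a haK _ c1 (le_refl _) h c3
        rw [hua] at this; exact le_of_lt this
    · rcases eq_or_lt_of_le c3 with heq | h
      · rw [heq, hub]
      · have := hmono _ c1 b hbK c2 h (le_refl _)
        rw [hub] at this; exact le_of_lt this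

theorem pow_mono
    (haK : a ∈ K) (hbK : b ∈ K)
    (hmono : ∀ x ∈ K, ∀ y ∈ K, a ≤ x → x < y → y ≤ b → apK K u x < apK K u y)
    (hua : apK K u a = a) (hub : apK K u b = b) (n : ℕ) :
    ∀ x, x ∈ K → ∀ y, y ∈ K → a ≤ x → x ≤ y → y ≤ b →
      apK K (u ^ n) x ≤ apK K (u ^ n) y := by
  induction n with
  | zero => intro x _ y _ _ hxy _; simpa [pow_zero, apK_one] using hxy
  | succ n ih =>
    intro x hx y hy h1 hxy h3
    rw [apK_pow_succ, apK_pow_succ]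
    have hxmem := pow_mem u a b haK hbK hmono hua hub n x hx h1 (le_trans hxy h3)
    have hymem := pow_mem u a b haK hbK hmono hua hub n y hy (le_trans h1 hxy) h3
    have hle := ih x hx y hy h1 hxy h3
    rcases eq_or_lt_of_le hle with heq | hlt
    · rw [heq]
    · exact le_of_lt (hmono _ hxmem.1 _ hymem.1 hxmem.2.1 hlt hymem.2.2)

/-- Iterating a positive gap map pushes any interior point beyond any `c < b`. -/
theorem pushup (hKcl : IsClosed K)
    (hucont : Continuous fun x : K => ((u x : ℝ)))
    (haK : a ∈ K) (hbK : b ∈ K)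
    (hmono : ∀ x ∈ K, ∀ y ∈ K, a ≤ x → x < y → y ≤ b → apK K u x < apK K u y)
    (hua : apK K u a = a) (hub : apK K u b = b)
    (hsign : ∀ t, t ∈ K → a < t → t < b → t < apK K u t)
    (x₀ : ℝ) (h0K : x₀ ∈ K) (h0a : a < x₀) (h0b : x₀ < b)
    (c : ℝ) (hcb : c < b) :
    ∃ N : ℕ, c < apK K (u ^ N) x₀ := by
  by_contra hcon
  push_neg at hcon
  set z : ℕ → ℝ := fun n => apK K (u ^ n) x₀ with hzdef
  have hmem : ∀ n, z n ∈ K ∧ a < z n ∧ z n < b := fun n =>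
    pow_interior u a b haK hbK hmono hua hub n x₀ h0K h0a h0b
  have hinc : ∀ n, z n < z (n + 1) := by
    intro n
    have := hsign (z n) (hmem n).1 (hmem n).2.1 (hmem n).2.2
    rwa [← apK_pow_succ] at this
  have hsm : StrictMono z := strictMono_nat_of_lt_succ hinc
  have hbdd : BddAbove (Set.range z) := by
    refine ⟨c, ?_⟩
    rintro _ ⟨n, rfl⟩
    exact hcon n
  have htend : Filter.Tendsto z Filter.atTop (nhds (⨆ n, z n)) :=
    tendsto_atTop_ciSup hsm.monotone hbdd
  set L := ⨆ n, z n with hL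
  have hLK : L ∈ K := hKcl.mem_of_tendsto htend (Filter.Eventually.of_forall fun n => (hmem n).1)
  have hLa : a < L := lt_of_lt_of_le (hmem 0).2.1 (le_ciSup hbdd 0)
  have hLb : L < b := lt_of_le_of_lt (ciSup_le hcon) hcb
  have hfix : apK K u L = L := by
    have hsub : Filter.Tendsto (fun n => (⟨z n, (hmem n).1⟩ : ↥K)) Filter.atTop
        (nhds (⟨L, hLK⟩ : ↥K)) := by
      rw [tendsto_subtype_rng]
      exact htend
    have h2 : Filter.Tendsto (fun n => ((u ⟨z n, (hmem n).1⟩ : ↥K) : ℝ)) Filter.atTop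
        (nhds ((u ⟨L, hLK⟩ : ↥K) : ℝ)) := by
      exact (hucont.tendsto _).comp hsub
    have heqfun : ∀ n, ((u ⟨z n, (hmem n).1⟩ : ↥K) : ℝ) = z (n + 1) := by
      intro n
      rw [← apK_apply u (hmem n).1, ← apK_pow_succ]
    have h3 : Filter.Tendsto (fun n => z (n + 1)) Filter.atTop (nhds ((u ⟨L, hLK⟩ : ↥K) : ℝ)) := by
      refine h2.congr (fun n => heqfun n)
    have h4 : Filter.Tendsto (fun n => z (n + 1)) Filter.atTop (nhds L) := by
      have := htend.comp (Filter.tendsto_add_atTop_nat 1)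
      exact this
    have := tendsto_nhds_unique h3 h4
    rw [apK_apply u hLK, this]
  exact absurd hfix (ne_of_gt (hsign L hLK hLa hLb))

end GapDyn

/-- The compression configuration produces a free pair. -/
theorem compression (hKcl : IsClosed K) (hKcp : IsCompact K)
    (u v : Equiv.Perm K)
    (hucont : Continuous fun x : K => ((u x : ℝ)))
    (hvcont : Continuous fun x : K => ((v x : ℝ)))
    (a b : ℝ) (haK : a ∈ K) (hbK : b ∈ K)
    (hmono : ∀ x ∈ K, ∀ y ∈ K, a ≤ x → x < y → y ≤ b → apK K u x < apK K u y)
    (hua : apK K u a = a) (hub : apK K u b = b)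
    (hsign : ∀ t, t ∈ K → a < t → t < b → t < apK K u t)
    (ht₀a : a < apK K v b) (ht₀b : apK K v b < b) :
    ∃ N M : ℕ, IsFreePair (u ^ N) (v * u ^ M) := by
  set t₀ := apK K v b with ht₀def
  have ht₀K : t₀ ∈ K := apK_mem v hbK
  set ε := min (t₀ - a) (b - t₀) / 2 with hε
  have hεpos : 0 < ε := by
    apply div_pos _ (by norm_num)
    exact lt_min (by linarith) (by linarith)
  have hεlt1 : ε < t₀ - a := by
    have : min (t₀ - a) (b - t₀) ≤ t₀ - a := min_le_left _ _
    have h0 : 0 < t₀ - a := by linarith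
    rw [hε]; linarith [min_le_left (t₀ - a) (b - t₀)]
  have hεlt2 : ε < b - t₀ := by
    have h0 : 0 < b - t₀ := by linarith
    rw [hε]; linarith [min_le_right (t₀ - a) (b - t₀)]
  -- continuity of v at b
  obtain ⟨γ, hγpos, hγ⟩ : ∃ γ > 0, ∀ y, y ∈ K → |y - b| < γ → |apK K v y - t₀| < ε := by
    have hca : ContinuousAt (fun x : K => ((v x : ℝ))) ⟨b, hbK⟩ := hvcont.continuousAt
    rw [Metric.continuousAt_iff] at hca
    obtain ⟨δ, hδpos, hδ⟩ := hca ε hεpos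
    refine ⟨δ, hδpos, ?_⟩
    intro y hyK hyb
    have : dist (⟨y, hyK⟩ : ↥K) (⟨b, hbK⟩ : ↥K) < δ := by
      rw [Subtype.dist_eq]
      simpa [Real.dist_eq] using hyb
    have h2 := hδ this
    rw [Real.dist_eq] at h2
    rw [apK_apply v hyK, ht₀def, apK_apply v hbK]
    exact h2
  set d := t₀ - ε with hd
  have hda : a < d := by rw [hd]; linarith
  have htb' : t₀ + ε < b := by linarith
  -- the infimum of K ∩ [d, b]
  have hRcp : IsCompact (K ∩ Set.Icc d b) := hKcp.inter_right isClosed_Icc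
  have hRne : (K ∩ Set.Icc d b).Nonempty := ⟨t₀, ht₀K, by rw [hd]; constructor <;> linarith⟩
  obtain ⟨h0K, h0d, h0b'⟩ : sInf (K ∩ Set.Icc d b) ∈ K ∧ d ≤ sInf (K ∩ Set.Icc d b) ∧
      sInf (K ∩ Set.Icc d b) ≤ b := by
    have := hRcp.sInf_mem hRne
    exact ⟨this.1, this.2.1, this.2.2⟩
  set x₀ := sInf (K ∩ Set.Icc d b) with hx₀
  have hx₀t₀ : x₀ ≤ t₀ := csInf_le hRcp.bddBelow ⟨ht₀K, by rw [hd]; constructor <;> linarith⟩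
  have h0a : a < x₀ := lt_of_lt_of_le hda h0d
  have h0b : x₀ < b := lt_of_le_of_lt hx₀t₀ ht₀b
  obtain ⟨N, hN⟩ := pushup u a b hKcl hucont haK hbK hmono hua hub hsign x₀ h0K h0a h0b
    (t₀ + ε) htb'
  set cM := max (t₀ + ε) (b - γ / 2) with hcM
  have hcMb : cM < b := by
    rw [hcM]; apply max_lt htb'; linarith
  obtain ⟨M, hM⟩ := pushup u a b hKcl hucont haK hbK hmono hua hub hsign x₀ h0K h0a h0b cM hcMb
  refine ⟨N, M, ?_⟩
  set A := K ∩ Set.Ioo (t₀ + ε) b with hA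
  set B := K ∩ Set.Icc d (t₀ + ε) with hB
  -- membership in A ∪ B puts us in K ∩ [x₀, b)
  have hband : ∀ x, x ∈ A ∪ B → x ∈ K ∧ x₀ ≤ x ∧ a < x ∧ x < b := by
    intro x hx
    rcases hx with ⟨hxK, hx1, hx2⟩ | ⟨hxK, hx1, hx2⟩
    · refine ⟨hxK, csInf_le hRcp.bddBelow ⟨hxK, ?_⟩, by linarith, hx2⟩
      constructor
      · rw [hd]; linarith
      · exact le_of_lt hx2
    · refine ⟨hxK, csInf_le hRcp.bddBelow ⟨hxK, ⟨hx1, by linarith⟩⟩, by rw [hd] at hx1; linarith, by linarith⟩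
  apply pingpong (u ^ N) (v * u ^ M) A B
  · exact ⟨apK K (u ^ N) t₀, by
      have hmem := pow_interior u a b haK hbK hmono hua hub N t₀ ht₀K (by linarith) ht₀b
      have hge : apK K (u ^ N) x₀ ≤ apK K (u ^ N) t₀ :=
        pow_mono u a b haK hbK hmono hua hub N x₀ h0K t₀ ht₀K (le_of_lt h0a) hx₀t₀ (le_of_lt ht₀b)
      exact ⟨hmem.1, lt_of_lt_of_le hN hge, hmem.2.2⟩⟩
  · exact ⟨t₀, ht₀K, ⟨by rw [hd]; linarith, by linarith⟩⟩
  · rintro x ⟨-, hgt, -⟩ ⟨-, -, hle⟩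
    exact absurd hgt (not_lt.mpr hle)
  · intro x hx
    obtain ⟨hxK, hxx₀, hxa, hxb⟩ := hband x hx
    have hmem := pow_interior u a b haK hbK hmono hua hub N x hxK hxa hxb
    have hge : apK K (u ^ N) x₀ ≤ apK K (u ^ N) x :=
      pow_mono u a b haK hbK hmono hua hub N x₀ h0K x hxK (le_of_lt h0a) hxx₀ (le_of_lt hxb)
    exact ⟨hmem.1, lt_of_lt_of_le hN hge, hmem.2.2⟩
  · intro x hx
    obtain ⟨hxK, hxx₀, hxa, hxb⟩ := hband x hx
    have hmem := pow_interior u a b haK hbK hmono hua hub M x hxK hxa hxb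
    have hge : apK K (u ^ M) x₀ ≤ apK K (u ^ M) x :=
      pow_mono u a b haK hbK hmono hua hub M x₀ h0K x hxK (le_of_lt h0a) hxx₀ (le_of_lt hxb)
    have hclose : |apK K (u ^ M) x - b| < γ := by
      have h1 : b - γ / 2 ≤ cM := le_max_right _ _
      have h2 : b - γ / 2 < apK K (u ^ M) x := lt_of_le_of_lt h1 (lt_of_lt_of_le hM hge)
      rw [abs_lt]
      constructor <;> [linarith [hmem.2.2]; linarith [hmem.2.2]]
    have hv := hγ _ hmem.1 hclose
    rw [apK_mul]
    have habs := abs_lt.mp hv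
    refine ⟨apK_mem v hmem.1, ?_, ?_⟩
    · rw [hd]; linarith [habs.1]
    · linarith [habs.2]

end NFPL
namespace NFPL

variable {K : Set ℝ}

theorem neBot_left {p : ℝ} (haccK : AccLeft p K) : (nhdsWithin p (K \ {p})).NeBot := by
  rw [← mem_closure_iff_nhdsWithin_neBot, Metric.mem_closure_iff]
  intro ε hε
  obtain ⟨x, hx1, hx2⟩ := haccK (ε / 2) (by linarith)
  refine ⟨x, ⟨hx2, ?_⟩, ?_⟩
  · simp only [Set.mem_singleton_iff]
    exact ne_of_lt hx1.2
  · rw [Real.dist_eq, abs_of_nonneg (by linarith [hx1.2])]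
    linarith [hx1.1]

/-- Local chart data near the fixed point `p`. -/
theorem chart (G : Subgroup (Equiv.Perm K)) (hdiff : ∀ g ∈ G, MemDiffLip K g)
    (p : ℝ) (hpK : p ∈ K) (hNB : (nhdsWithin p (K \ {p})).NeBot)
    (s : Equiv.Perm K) (hs : s ∈ G)
    (hfixp : apK K s p = p)
    (d : ℝ) (hder : HasDerivOnK K s p d) (hd : 0 < d) :
    ∃ ρ > 0, (∀ α, 0 < α → α ≤ ρ → IncreasingOnK K s (Set.Icc (p - α) p)) ∧
      (∀ x ∈ K, ∀ y ∈ K, p - ρ ≤ x → x < y → y ≤ p → apK K s x < apK K s y) := by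
  obtain ⟨A, B, hmem, F, F', hF, hF'c, hFinj, hlip, hagree⟩ := (hdiff s hs).2.2 ⟨p, hpK⟩
  have hFp : F p = p := by rw [hagree p hmem hpK, hfixp]
  have hslope : Filter.Tendsto (slope F p) (nhdsWithin p (K \ {p})) (nhds (F' p)) := by
    have h1 := hasDerivAt_iff_tendsto_slope.mp (hF p hmem).1
    exact h1.mono_left (nhdsWithin_mono p (fun y hy => hy.2))
  have hslope_eq : ∀ᶠ y in nhdsWithin p (K \ {p}),
      slope F p y = (apK K s y - apK K s p) / (y - p) := by
    have hIoo : ∀ᶠ y in nhdsWithin p (K \ {p}), y ∈ Set.Ioo A B :=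
      mem_nhdsWithin_of_mem_nhds (isOpen_Ioo.mem_nhds hmem)
    filter_upwards [hIoo, self_mem_nhdsWithin] with y hy1 hy2
    rw [slope_def_field, hagree y hy1 hy2.1, hFp, hfixp]
  have hd_eq : F' p = d := tendsto_nhds_unique (hslope.congr' hslope_eq) hder
  have hF'p : 0 < F' p := by rw [hd_eq]; exact hd
  have hcont : ContinuousAt F' p := (hF'c.continuousAt (isOpen_Ioo.mem_nhds hmem))
  have hpre : F' ⁻¹' Set.Ioi 0 ∈ nhds p := hcont (Ioi_mem_nhds hF'p)
  obtain ⟨ε, hεpos, hεsub⟩ :=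
    Metric.mem_nhds_iff.mp (Filter.inter_mem hpre (isOpen_Ioo.mem_nhds hmem))
  have hsub : ∀ y ∈ Set.Icc (p - ε / 2) p, 0 < F' y ∧ y ∈ Set.Ioo A B := by
    intro y hy
    have : y ∈ Metric.ball p ε := by
      rw [Metric.mem_ball, Real.dist_eq, abs_lt]
      constructor <;> linarith [hy.1, hy.2, hεpos]
    exact hεsub this
  have hsm : StrictMonoOn F (Set.Icc (p - ε / 2) p) := by
    apply strictMonoOn_of_deriv_pos (convex_Icc _ _)
    · intro y hy
      exact ((hF y (hsub y hy).2).1.continuousAt).continuousWithinAt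
    · intro y hy
      rw [interior_Icc] at hy
      have hy' : y ∈ Set.Icc (p - ε / 2) p := Set.mem_Icc.mpr ⟨le_of_lt hy.1, le_of_lt hy.2⟩
      rw [(hF y (hsub y hy').2).1.deriv]
      exact (hsub y hy').1
  refine ⟨ε / 2, by linarith, ?_, ?_⟩
  · -- IncreasingOnK
    intro α hα hαρ
    have hIcc : Set.Icc (p - α) p ⊆ Set.Icc (p - ε / 2) p :=
      Set.Icc_subset_Icc (by linarith) (le_refl _)
    refine ⟨F, F', hsm.mono hIcc, ?_, ?_, ?_⟩
    · intro y hy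
      exact ⟨((hF y (hsub y (hIcc hy)).2).1).hasDerivWithinAt, (hsub y (hIcc hy)).1⟩
    · exact hF'c.mono (fun y hy => (hsub y (hIcc hy)).2)
    · intro y hy hyK
      exact hagree y (hsub y (hIcc hy)).2 hyK
  · -- monotonicity on K ∩ window
    intro x hxK y hyK h1 h2 h3
    have hx : x ∈ Set.Icc (p - ε / 2) p := ⟨h1, le_trans (le_of_lt h2) h3⟩
    have hy : y ∈ Set.Icc (p - ε / 2) p := ⟨le_trans h1 (le_of_lt h2), h3⟩
    have := hsm hx hy h2
    rwa [hagree x (hsub x hx).2 hxK, hagree y (hsub y hy).2 hyK] at this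

end NFPL
namespace NFPL

variable {K : Set ℝ}

/-- The main chain/pigeonhole argument. -/
theorem main_chain (hKcl : IsClosed K) (hKcp : IsCompact K)
    (G₁ : Subgroup (Equiv.Perm K))
    (hcontra : ∀ φ ψ : Equiv.Perm K, φ ∈ G₁ → ψ ∈ G₁ → IsFreePair φ ψ → False)
    (Sfin : Finset (Equiv.Perm K))
    (p η Wst : ℝ) (hηpos : 0 < η) (hWp : Wst < p)
    (hS1 : ∀ s ∈ Sfin, s ∈ G₁)
    (hS2 : ∀ s ∈ Sfin, s⁻¹ ∈ Sfin)
    (hScont : ∀ s ∈ Sfin, Continuous fun x : K => ((s x : ℝ)))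
    (hSmono : ∀ s ∈ Sfin, ∀ x ∈ K, ∀ y ∈ K,
      p - η ≤ x → x < y → y ≤ p → apK K s x < apK K s y)
    (hmove : ∀ x, x ∈ K → Wst < x → x < p → ∃ s ∈ Sfin, apK K s x ≠ x)
    (hanchor : ∀ s ∈ Sfin, ∃ w, w ∈ K ∧ apK K s w = w ∧ p - η ≤ w ∧ w ≤ Wst)
    (hfixnear : ∀ s ∈ Sfin, ∀ β, 0 < β → ∃ z, z ∈ K ∧ p - β ≤ z ∧ z < p ∧ apK K s z = z)
    (hpK : p ∈ K) (hpfix : ∀ s ∈ Sfin, apK K s p = p) :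
    ∀ n : ℕ, ∀ T : Finset (Equiv.Perm K), T ⊆ Sfin → Sfin.card ≤ T.card + n →
    ∀ u, u ∈ Sfin → ∀ a b : ℝ, a ∈ K → b ∈ K →
    p - η ≤ a → a < b → Wst < b → b < p →
    apK K u a = a → apK K u b = b →
    (∀ t, t ∈ K → a < t → t < b → t < apK K u t) →
    (∀ t, t ∈ T → ∃ z, z ∈ K ∧ a < z ∧ z < b ∧ apK K t z = z) →
    False := by
  classical
  intro n
  induction n with
  | zero =>
    intro T hTsub hcard u huS a b _ _ _ _ _ _ _ _ hsgn hINV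
    have huT : u ∉ T := by
      intro huT
      obtain ⟨z, hzK, hz1, hz2, hzfix⟩ := hINV u huT
      exact absurd hzfix (ne_of_gt (hsgn z hzK hz1 hz2))
    have : T ⊂ Sfin := ⟨hTsub, fun hsub => huT (hsub huS)⟩
    have := Finset.card_lt_card this
    omega
  | succ n ih =>
    intro T hTsub hcard u huS a b haK hbK haη hab hWb hbp hua hub hsgn hINV
    have huT : u ∉ T := by
      intro huT
      obtain ⟨z, hzK, hz1, hz2, hzfix⟩ := hINV u huT
      exact absurd hzfix (ne_of_gt (hsgn z hzK hz1 hz2))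
    -- find a mover of b
    obtain ⟨f, hfS, hfb⟩ := hmove b hbK hWb hbp
    obtain ⟨w, hwK, hwfix, hwη, hwW⟩ := hanchor f hfS
    have hwb : w ≤ b := le_trans hwW (le_of_lt hWb)
    -- the gap of f around b
    have hFlow : IsCompact {y : ℝ | y ∈ K ∧ y ∈ Set.Icc w b ∧ apK K f y = y} :=
      cpt_gen hKcp f (hScont f hfS) w b (fun a b => b = a)
        (isClosed_eq continuous_snd continuous_fst)
    have hFlowne : Set.Nonempty {y : ℝ | y ∈ K ∧ y ∈ Set.Icc w b ∧ apK K f y = y} :=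
      ⟨w, hwK, ⟨le_refl _, hwb⟩, hwfix⟩
    obtain ⟨hasK, ⟨hwas, hasb⟩, hasfix⟩ := hFlow.sSup_mem hFlowne
    set as := sSup {y : ℝ | y ∈ K ∧ y ∈ Set.Icc w b ∧ apK K f y = y} with hasdef
    have hasb' : as < b := lt_of_le_of_ne hasb (fun h => hfb (h ▸ hasfix))
    have hFhigh : IsCompact {y : ℝ | y ∈ K ∧ y ∈ Set.Icc b p ∧ apK K f y = y} :=
      cpt_gen hKcp f (hScont f hfS) b p (fun a b => b = a)
        (isClosed_eq continuous_snd continuous_fst)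
    have hFhighne : Set.Nonempty {y : ℝ | y ∈ K ∧ y ∈ Set.Icc b p ∧ apK K f y = y} := by
      obtain ⟨z, hzK, hz1, hz2, hz3⟩ := hfixnear f hfS (p - b) (by linarith)
      exact ⟨z, hzK, ⟨by linarith, le_of_lt hz2⟩, hz3⟩
    obtain ⟨hbsK, ⟨hbbs, hbsp⟩, hbsfix⟩ := hFhigh.sInf_mem hFhighne
    set bs := sInf {y : ℝ | y ∈ K ∧ y ∈ Set.Icc b p ∧ apK K f y = y} with hbsdef
    have hbsp' : bs < p := by
      obtain ⟨z, hzK, hz1, hz2, hz3⟩ := hfixnear f hfS (p - b) (by linarith)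
      have : bs ≤ z := csInf_le hFhigh.bddBelow ⟨hzK, ⟨by linarith, le_of_lt hz2⟩, hz3⟩
      exact lt_of_le_of_lt this hz2
    have hbbs' : b < bs := lt_of_le_of_ne hbbs (fun h => hfb (by rw [← h] at hbsfix; exact hbsfix))
    -- gap of f is fixed-point free
    have hgapf : ∀ t, t ∈ K → as < t → t < bs → apK K f t ≠ t := by
      intro t htK h1 h2 hfix
      rcases lt_trichotomy t b with h | h | h
      · have : t ≤ as := le_csSup hFlow.bddAbove
          ⟨htK, ⟨le_trans hwas (le_of_lt h1), le_of_lt h⟩, hfix⟩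
        exact absurd h1 (not_lt.mpr this)
      · exact hfb (h ▸ hfix)
      · have : bs ≤ t := csInf_le hFhigh.bddBelow
          ⟨htK, ⟨le_of_lt h, le_trans (le_of_lt h2) (le_of_lt hbsp')⟩, hfix⟩
        exact absurd h2 (not_lt.mpr this)
    have hasη : p - η ≤ as := le_trans hwη hwas
    -- orientation : u' moves b up
    obtain ⟨u', hu'S, hu'a, hu'b, hu'gap, hu'sgnb⟩ :
        ∃ u', u' ∈ Sfin ∧ apK K u' as = as ∧ apK K u' bs = bs ∧
          (∀ t, t ∈ K → as < t → t < bs → apK K u' t ≠ t) ∧ b < apK K u' b := by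
      rcases lt_or_ge b (apK K f b) with hdir | hdir
      · exact ⟨f, hfS, hasfix, hbsfix, hgapf, hdir⟩
      · have hdir' : apK K f b < b := lt_of_le_of_ne hdir hfb
        refine ⟨f⁻¹, hS2 f hfS, apK_fix_inv f hasfix, apK_fix_inv f hbsfix, ?_, ?_⟩
        · intro t htK h1 h2 hfix
          have : apK K f t = t := by
            conv_lhs => rw [← hfix]
            exact apK_apK_inv f t
          exact hgapf t htK h1 h2 this
        · have hrK : apK K f b ∈ K := apK_mem f hbK
          have hra : as < apK K f b := by
            have := hSmono f hfS as hasK b hbK hasη hasb' (le_of_lt hbp)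
            rwa [hasfix] at this
          have := hSmono f⁻¹ (hS2 f hfS) (apK K f b) hrK b hbK
            (le_trans hasη (le_of_lt hra)) hdir' (le_of_lt hbp)
          rwa [apK_inv_apK] at this
    -- constant sign on the new gap
    have hu'inv_mono : ∀ x ∈ K, ∀ y ∈ K, as ≤ x → x < y → y ≤ bs →
        apK K u'⁻¹ x < apK K u'⁻¹ y := by
      intro x hx y hy h1 h2 h3
      exact hSmono u'⁻¹ (hS2 u' hu'S) x hx y hy (le_trans hasη h1) h2
        (le_trans h3 (le_of_lt (lt_of_lt_of_le hbsp' (le_refl _))))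
    have hu'mono : ∀ x ∈ K, ∀ y ∈ K, as ≤ x → x < y → y ≤ bs →
        apK K u' x < apK K u' y := by
      intro x hx y hy h1 h2 h3
      exact hSmono u' hu'S x hx y hy (le_trans hasη h1) h2
        (le_trans h3 (le_of_lt hbsp'))
    have hsign' : ∀ t, t ∈ K → as < t → t < bs → t < apK K u' t :=
      sign_const hKcp u' (hScont u' hu'S) (hScont u'⁻¹ (hS2 u' hu'S)) as bs hasK hbsK
        hu'mono hu'inv_mono hu'a hu'b hu'gap b hbK hasb' hbbs' hu'sgnb
    -- the pulled-back point
    set v := u'⁻¹ with hvdef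
    have hvS : v ∈ Sfin := hS2 u' hu'S
    have ht₀K : apK K v b ∈ K := apK_mem v hbK
    have ht₀b : apK K v b < b := by
      have hrK : apK K u' b ∈ K := apK_mem u' hbK
      have hrb : apK K u' b < bs := by
        have := hu'mono b hbK bs hbsK (le_of_lt hasb') hbbs' (le_refl _)
        rwa [hu'b] at this
      have := hu'inv_mono b hbK (apK K u' b) hrK (le_of_lt hasb') hu'sgnb (le_of_lt hrb)
      rwa [apK_inv_apK] at this
    have ht₀as : as < apK K v b := by
      have := hu'inv_mono as hasK b hbK (le_refl _) hasb' (le_of_lt hbbs')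
      rwa [apK_fix_inv u' hu'a] at this
    rcases lt_or_ge a (apK K v b) with hloc | hloc
    · -- landing: compression and free subsemigroup
      obtain ⟨N, M, hfp⟩ := compression hKcl hKcp u v (hScont u huS) (hScont v hvS)
        a b haK hbK
        (fun x hx y hy h1 h2 h3 => hSmono u huS x hx y hy (le_trans haη h1) h2
          (le_trans h3 (le_of_lt hbp)))
        hua hub hsgn hloc ht₀b
      have hu1 : u ∈ G₁ := hS1 u huS
      have hv1 : v ∈ G₁ := hS1 v hvS
      exact hcontra _ _ (Subgroup.pow_mem _ hu1 N) (mul_mem hv1 (Subgroup.pow_mem _ hu1 M)) hfp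
    · -- escape : recurse with larger gap
      have hasa : as < a := lt_of_lt_of_le ht₀as hloc
      refine ih (insert u T) ?_ ?_ u' hu'S as bs hasK hbsK hasη
        (lt_trans hasb' hbbs') (lt_trans hWb hbbs') hbsp' hu'a hu'b hsign' ?_
      · exact Finset.insert_subset huS hTsub
      · rw [Finset.card_insert_of_notMem huT]
        omega
      · intro t htT
        rcases Finset.mem_insert.mp htT with rfl | htT'
        · exact ⟨b, hbK, hasb', hbbs', hub⟩
        · obtain ⟨z, hzK, hz1, hz2, hz3⟩ := hINV t htT'
          exact ⟨z, hzK, lt_trans hasa hz1, lt_trans hz2 hbbs', hz3⟩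

end NFPL
namespace NFPL

variable {K : Set ℝ}

/-- Stabilizer of a real point, as a subgroup. -/
def stab (K : Set ℝ) (x : ℝ) : Subgroup (Equiv.Perm K) where
  carrier := {g | apK K g x = x}
  one_mem' := apK_one x
  mul_mem' := by
    intro a b ha hb
    simp only [Set.mem_setOf_eq] at *
    rw [apK_mul, hb, ha]
  inv_mem' := by
    intro a ha
    simp only [Set.mem_setOf_eq] at *
    exact apK_fix_inv a ha

theorem apK_cont (f : Equiv.Perm K) (hfc : Continuous fun x : K => ((f x : ℝ)))
    {b : ℝ} (hbK : b ∈ K) (ε : ℝ) (hε : 0 < ε) :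
    ∃ δ > 0, ∀ y, y ∈ K → |y - b| < δ → |apK K f y - apK K f b| < ε := by
  have hca : ContinuousAt (fun x : K => ((f x : ℝ))) ⟨b, hbK⟩ := hfc.continuousAt
  rw [Metric.continuousAt_iff] at hca
  obtain ⟨δ, hδpos, hδ⟩ := hca ε hε
  refine ⟨δ, hδpos, ?_⟩
  intro y hyK hyb
  have : dist (⟨y, hyK⟩ : ↥K) (⟨b, hbK⟩ : ↥K) < δ := by
    rw [Subtype.dist_eq]
    simpa [Real.dist_eq] using hyb
  have h2 := hδ this
  rw [Real.dist_eq] at h2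
  rw [apK_apply f hyK, apK_apply f hbK]
  exact h2

/-- A common chart window for a finite set of elements of `G₁`. -/
theorem common_window (G G₁ : Subgroup (Equiv.Perm K)) (hle : G₁ ≤ G)
    (hdiff : ∀ g ∈ G, MemDiffLip K g)
    (p : ℝ) (hp : p ∈ fixedSet K G₁) (hNB : (nhdsWithin p (K \ {p})).NeBot)
    (hpos : ∀ g ∈ G₁, ∀ q ∈ fixedSet K G₁, ∃ d : ℝ, HasDerivOnK K g q d ∧ 0 < d)
    (Sfin : Finset (Equiv.Perm K)) :
    (∀ s ∈ Sfin, s ∈ G₁) →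
    ∃ η > 0, ∀ s ∈ Sfin, (∀ α, 0 < α → α ≤ η → IncreasingOnK K s (Set.Icc (p - α) p)) ∧
      (∀ x ∈ K, ∀ y ∈ K, p - η ≤ x → x < y → y ≤ p → apK K s x < apK K s y) := by
  classical
  induction Sfin using Finset.induction_on with
  | empty => intro _; exact ⟨1, one_pos, by simp⟩
  | @insert s T hsT ih =>
    intro hS1
    obtain ⟨η, hηpos, hη⟩ := ih (fun t ht => hS1 t (Finset.mem_insert_of_mem ht))
    have hsG₁ : s ∈ G₁ := hS1 s (Finset.mem_insert_self s T)
    obtain ⟨d, hder, hdpos⟩ := hpos s hsG₁ p hp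
    obtain ⟨ρ, hρpos, hρ1, hρ2⟩ := chart G hdiff p hp.1 hNB s (hle hsG₁)
      (hp.2 s hsG₁) d hder hdpos
    refine ⟨min ρ η, lt_min hρpos hηpos, ?_⟩
    intro t ht
    rcases Finset.mem_insert.mp ht with rfl | htT
    · constructor
      · intro α hα hαm
        exact hρ1 α hα (le_trans hαm (min_le_left _ _))
      · intro x hx y hy h1 h2 h3
        exact hρ2 x hx y hy (le_trans (by linarith [min_le_left ρ η]) h1) h2 h3
    · obtain ⟨hI, hM⟩ := hη t htT
      constructor
      · intro α hα hαm
        exact hI α hα (le_trans hαm (min_le_right _ _))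
      · intro x hx y hy h1 h2 h3
        exact hM x hx y hy (le_trans (by linarith [min_le_right ρ η]) h1) h2 h3

/-- A common anchor level for a finite set of elements, given nearby fixed points. -/
theorem anchors (p η : ℝ) (hη : 0 < η) (Sfin : Finset (Equiv.Perm K)) :
    (∀ s ∈ Sfin, ∀ β, 0 < β → ∃ z, z ∈ K ∧ p - β ≤ z ∧ z < p ∧ apK K s z = z) →
    ∃ Wst, Wst < p ∧ ∀ s ∈ Sfin, ∃ w, w ∈ K ∧ apK K s w = w ∧ p - η ≤ w ∧ w ≤ Wst := by
  classical
  induction Sfin using Finset.induction_on with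
  | empty => intro _; exact ⟨p - η, by linarith, by simp⟩
  | @insert s T hsT ih =>
    intro hfix
    obtain ⟨Wst, hWp, hW⟩ := ih (fun t ht => hfix t (Finset.mem_insert_of_mem ht))
    obtain ⟨w, hwK, hw1, hw2, hw3⟩ := hfix s (Finset.mem_insert_self s T) η hη
    refine ⟨max Wst w, max_lt hWp hw2, ?_⟩
    intro t ht
    rcases Finset.mem_insert.mp ht with rfl | htT
    · exact ⟨w, hwK, hw3, hw1, le_max_right _ _⟩
    · obtain ⟨w', h1, h2, h3, h4⟩ := hW t htT
      exact ⟨w', h1, h2, h3, le_trans h4 (le_max_left _ _)⟩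

/-- A common continuity threshold at `p`. -/
theorem thetas (p η : ℝ) (hη : 0 < η) (hpK : p ∈ K) (Sfin : Finset (Equiv.Perm K)) :
    (∀ s ∈ Sfin, Continuous fun x : K => ((s x : ℝ))) →
    (∀ s ∈ Sfin, apK K s p = p) →
    ∃ θ > 0, ∀ s ∈ Sfin, ∀ y, y ∈ K → |y - p| < θ → |apK K s y - p| < η := by
  classical
  induction Sfin using Finset.induction_on with
  | empty => intro _ _; exact ⟨1, one_pos, by simp⟩
  | @insert s T hsT ih =>
    intro hcont hfix
    obtain ⟨θ, hθpos, hθ⟩ := ih (fun t ht => hcont t (Finset.mem_insert_of_mem ht))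
      (fun t ht => hfix t (Finset.mem_insert_of_mem ht))
    obtain ⟨δ, hδpos, hδ⟩ := apK_cont s (hcont s (Finset.mem_insert_self s T)) hpK η hη
    refine ⟨min θ δ, lt_min hθpos hδpos, ?_⟩
    intro t ht y hyK hyp
    rcases Finset.mem_insert.mp ht with rfl | htT
    · have := hδ y hyK (lt_of_lt_of_le hyp (min_le_right _ _))
      rwa [hfix t (Finset.mem_insert_self t T)] at this
    · exact hθ t htT y hyK (lt_of_lt_of_le hyp (min_le_left _ _))

end NFPL
/-- If `p ∈ Fix(G₁)` is isolated on the left in `Fix(G₁)` but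
accumulated on the left by `K`, some `h ∈ G₁` is increasing on `[p−α, p]` and
moves every point of `[p−α, p) ∩ K` to the right. -/
theorem no_fixed_point_on_left (K : Set ℝ) (hK : IsCantorInR K)
    (G : Subgroup (Equiv.Perm K))
    (hdiff : ∀ g ∈ G, MemDiffLip K g)
    (hFG : G.FG)
    (hfree : HasNoFreeSubsemigroup G)
    (G₁ : Subgroup (Equiv.Perm K)) (hle : G₁ ≤ G) (hidx : G₁.relIndex G ≠ 0)
    (hmin : ∀ A : Set ℝ, IsMinimalInvariantSet K G₁ A → ∃ p ∈ fixedSet K G₁, A = {p})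
    (hpos : ∀ g ∈ G₁, ∀ p ∈ fixedSet K G₁, ∃ d : ℝ, HasDerivOnK K g p d ∧ 0 < d)
    (p : ℝ) (hp : p ∈ fixedSet K G₁)
    (hisol : ¬ AccLeft p (fixedSet K G₁))
    (haccK : AccLeft p K) :
    ∃ h ∈ G₁, ∃ α : ℝ, 0 < α ∧ IncreasingOnK K h (Set.Icc (p - α) p) ∧
      ∀ x ∈ Set.Ico (p - α) p ∩ K, x < apK K h x := by
  classical
  obtain ⟨hKne, hKcp, hKtd, hKperf⟩ := hK
  have hKcl : IsClosed K := hKcp.isClosed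
  have hpK : p ∈ K := hp.1
  have hNB : (nhdsWithin p (K \ {p})).NeBot := NFPL.neBot_left haccK
  have hcontra : ∀ φ ψ : Equiv.Perm K, φ ∈ G₁ → ψ ∈ G₁ → IsFreePair φ ψ → False := by
    intro φ ψ h1 h2 hf
    exact hfree ⟨φ, hle h1, ψ, hle h2, hf⟩
  obtain ⟨α₀, hα₀pos, hα₀⟩ : ∃ α₀ > 0, ∀ x, x ∈ Set.Ico (p - α₀) p → x ∉ fixedSet K G₁ := by
    rw [AccLeft] at hisol; push_neg at hisol
    obtain ⟨α₀, h1, h2⟩ := hisol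
    refine ⟨α₀, h1, ?_⟩
    intro x hx hxm
    have : x ∈ Set.Ico (p - α₀) p ∩ fixedSet K G₁ := ⟨hx, hxm⟩
    rw [h2] at this
    exact this
  have hG1fg : G₁.FG := by
    haveI : Group.FG ↥G := (Group.fg_iff_subgroup_fg G).mpr hFG
    haveI : (G₁.subgroupOf G).FiniteIndex := ⟨hidx⟩
    have h1 : (G₁.subgroupOf G).FG := (Group.fg_iff_subgroup_fg _).mp inferInstance
    obtain ⟨S, hS⟩ := h1
    refine ⟨S.image (G.subtype), ?_⟩
    rw [Finset.coe_image, ← MonoidHom.map_closure, hS, Subgroup.subgroupOf_map_subtype]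
    exact inf_eq_left.mpr hle
  obtain ⟨S₀, hS₀⟩ := hG1fg
  have hS₀G₁ : ∀ s ∈ S₀, s ∈ G₁ := fun s hs => hS₀ ▸ Subgroup.subset_closure hs
  set Sfin : Finset (Equiv.Perm K) := insert 1 (S₀ ∪ S₀.image (·⁻¹)) with hSfin
  have hS1 : ∀ s ∈ Sfin, s ∈ G₁ := by
    intro s hs
    rcases Finset.mem_insert.mp hs with rfl | hs
    · exact one_mem _
    rcases Finset.mem_union.mp hs with h | h
    · exact hS₀G₁ s h
    · obtain ⟨t, ht, rfl⟩ := Finset.mem_image.mp h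
      exact inv_mem (hS₀G₁ t ht)
  have hS2 : ∀ s ∈ Sfin, s⁻¹ ∈ Sfin := by
    intro s hs
    rcases Finset.mem_insert.mp hs with rfl | hs
    · rw [inv_one, hSfin]
      exact Finset.mem_insert_self _ _
    rcases Finset.mem_union.mp hs with h | h
    · exact Finset.mem_insert_of_mem (Finset.mem_union_right _ (Finset.mem_image_of_mem _ h))
    · obtain ⟨t, ht, rfl⟩ := Finset.mem_image.mp h
      rw [inv_inv]
      exact Finset.mem_insert_of_mem (Finset.mem_union_left _ ht)
  have hScont : ∀ s ∈ Sfin, Continuous fun x : K => ((s x : ℝ)) := by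
    intro s hs
    exact continuous_subtype_val.comp (hdiff s (hle (hS1 s hs))).1
  have hSfix : ∀ s ∈ Sfin, apK K s p = p := fun s hs => hp.2 s (hS1 s hs)
  obtain ⟨η, hηpos, hηall⟩ := NFPL.common_window G G₁ hle hdiff p hp hNB hpos Sfin hS1
  have hSmono : ∀ s ∈ Sfin, ∀ x ∈ K, ∀ y ∈ K, p - η ≤ x → x < y → y ≤ p →
      apK K s x < apK K s y := fun s hs => (hηall s hs).2
  by_contra hFAIL
  push_neg at hFAIL
  have hF0 : ∀ s ∈ Sfin, ∀ α, 0 < α → α ≤ η →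
      ∃ x, x ∈ K ∧ p - α ≤ x ∧ x < p ∧ apK K s x ≤ x := by
    intro s hs α h1 h2
    obtain ⟨x, hx1, hx2⟩ := hFAIL s (hS1 s hs) α h1 ((hηall s hs).1 α h1 h2)
    exact ⟨x, hx1.2, hx1.1.1, hx1.1.2, hx2⟩
  have hF1 : ∀ s ∈ Sfin, ∀ β, 0 < β → ∃ z, z ∈ K ∧ p - β ≤ z ∧ z < p ∧ apK K s z = z := by
    intro s hs β hβ
    have hβ'pos : 0 < min β η := lt_min hβ hηpos
    obtain ⟨θ₁, hθ₁pos, hθ₁⟩ := NFPL.apK_cont s⁻¹ (hScont s⁻¹ (hS2 s hs)) hpK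
      (min β η) hβ'pos
    have hαpos : 0 < min (θ₁ / 2) (min β η) := lt_min (by linarith) hβ'pos
    obtain ⟨x₁, hx₁K, hx₁1, hx₁2, hx₁3⟩ := hF0 s⁻¹ (hS2 s hs) (min (θ₁ / 2) (min β η)) hαpos
      (le_trans (min_le_right _ _) (min_le_right _ _))
    have hyK : apK K s⁻¹ x₁ ∈ K := NFPL.apK_mem s⁻¹ hx₁K
    have hyp : apK K s⁻¹ x₁ < p := lt_of_le_of_lt hx₁3 hx₁2
    have hynear : p - min β η < apK K s⁻¹ x₁ := by
      have h1 : |x₁ - p| < θ₁ := by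
        rw [abs_of_nonpos (by linarith), neg_sub]
        have h2 : min (θ₁ / 2) (min β η) ≤ θ₁ / 2 := min_le_left _ _
        linarith
      have h3 := hθ₁ x₁ hx₁K h1
      rw [NFPL.apK_fix_inv s (hSfix s hs)] at h3
      have h4 := (abs_lt.mp h3).1
      linarith
    have hsy : apK K s⁻¹ x₁ ≤ apK K s (apK K s⁻¹ x₁) := by
      rw [NFPL.apK_apK_inv]
      exact hx₁3
    have hα₂pos : 0 < min (p - apK K s⁻¹ x₁) η := lt_min (by linarith) hηpos
    obtain ⟨x₂, hx₂K, hx₂1, hx₂2, hx₂3⟩ := hF0 s hs (min (p - apK K s⁻¹ x₁) η) hα₂pos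
      (min_le_right _ _)
    have hyx₂ : apK K s⁻¹ x₁ ≤ x₂ := by
      have : p - min (p - apK K s⁻¹ x₁) η ≥ apK K s⁻¹ x₁ := by
        have := min_le_left (p - apK K s⁻¹ x₁) η
        linarith
      linarith
    obtain ⟨z, hzK, hz1, hz2, hz3⟩ := NFPL.lemA hKcp s (hScont s hs) (apK K s⁻¹ x₁) x₂
      hyK hx₂K hyx₂
      (fun x' hx' y' hy' h1 h2 h3 => hSmono s hs x' hx' y' hy'
        (by have := min_le_right β η; linarith) h2 (le_trans h3 (le_of_lt hx₂2)))
      hsy hx₂3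
    refine ⟨z, hzK, ?_, lt_of_le_of_lt hz2 hx₂2, hz3⟩
    have := min_le_left β η
    linarith
  obtain ⟨Wst0, hWst0p, hanchor0⟩ := NFPL.anchors p η hηpos Sfin hF1
  obtain ⟨θ, hθpos, hθ⟩ := NFPL.thetas p η hηpos hpK Sfin hScont hSfix
  have hWstp : max Wst0 (p - α₀) < p := max_lt hWst0p (by linarith)
  have hanchor : ∀ s ∈ Sfin, ∃ w, w ∈ K ∧ apK K s w = w ∧ p - η ≤ w ∧
      w ≤ max Wst0 (p - α₀) := by
    intro s hs
    obtain ⟨w, h1, h2, h3, h4⟩ := hanchor0 s hs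
    exact ⟨w, h1, h2, h3, le_trans h4 (le_max_left _ _)⟩
  have hmove : ∀ x, x ∈ K → max Wst0 (p - α₀) < x → x < p → ∃ s ∈ Sfin, apK K s x ≠ x := by
    intro x hxK h1 h2
    have hxnot : x ∉ fixedSet K G₁ :=
      hα₀ x ⟨le_of_lt (lt_of_le_of_lt (le_max_right _ _) h1), h2⟩
    by_contra hall
    push_neg at hall
    apply hxnot
    refine ⟨hxK, ?_⟩
    intro g hg
    have hsub : (S₀ : Set (Equiv.Perm K)) ⊆ ↑(NFPL.stab K x) := by
      intro t ht
      exact hall t (Finset.mem_insert_of_mem (Finset.mem_union_left _ ht))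
    have hle2 : G₁ ≤ NFPL.stab K x := by
      rw [← hS₀]
      exact (Subgroup.closure_le _).mpr hsub
    exact hle2 hg
  have hαxpos : 0 < min θ (p - max Wst0 (p - α₀)) := lt_min hθpos (by linarith)
  obtain ⟨x, ⟨hx1, hx2⟩, hxK⟩ := haccK (min θ (p - max Wst0 (p - α₀)) / 2) (by linarith)
  have hxWst : max Wst0 (p - α₀) < x := by
    have := min_le_right θ (p - max Wst0 (p - α₀))
    linarith
  have hxθ : |x - p| < θ := by
    have := min_le_left θ (p - max Wst0 (p - α₀))
    rw [abs_of_nonpos (by linarith), neg_sub]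
    linarith
  obtain ⟨s, hsS, hsne⟩ := hmove x hxK hxWst hx2
  obtain ⟨g, hgS, hgx⟩ : ∃ g ∈ Sfin, x < apK K g x := by
    rcases lt_or_ge x (apK K s x) with h | h
    · exact ⟨s, hsS, h⟩
    · have hlt : apK K s x < x := lt_of_le_of_ne h hsne
      have hy'K : apK K s x ∈ K := NFPL.apK_mem s hxK
      have hy'w : p - η < apK K s x := by
        have h5 := (abs_lt.mp (hθ s hsS x hxK hxθ)).1
        linarith
      refine ⟨s⁻¹, hS2 s hsS, ?_⟩
      have := hSmono s⁻¹ (hS2 s hsS) (apK K s x) hy'K x hxK (le_of_lt hy'w) hlt (le_of_lt hx2)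
      rwa [NFPL.apK_inv_apK] at this
  -- build the initial gap of g around x
  obtain ⟨w, hwK, hwfix, hwη, hwW0⟩ := hanchor0 g hgS
  have hwx : w ≤ x := le_trans (le_trans hwW0 (le_max_left _ _)) (le_of_lt hxWst)
  have hgne' : apK K g x ≠ x := fun h => absurd h.symm (ne_of_lt hgx)
  have hFlow : IsCompact {y : ℝ | y ∈ K ∧ y ∈ Set.Icc w x ∧ apK K g y = y} :=
    NFPL.cpt_gen hKcp g (hScont g hgS) w x (fun a b => b = a)
      (isClosed_eq continuous_snd continuous_fst)
  have hFlowne : Set.Nonempty {y : ℝ | y ∈ K ∧ y ∈ Set.Icc w x ∧ apK K g y = y} :=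
    ⟨w, hwK, ⟨le_refl _, hwx⟩, hwfix⟩
  obtain ⟨ha1K, ⟨hwa1, ha1x⟩, ha1fix⟩ := hFlow.sSup_mem hFlowne
  set a₁ := sSup {y : ℝ | y ∈ K ∧ y ∈ Set.Icc w x ∧ apK K g y = y} with ha1def
  have ha1x' : a₁ < x := lt_of_le_of_ne ha1x (fun h => hgne' (h ▸ ha1fix))
  have hFhigh : IsCompact {y : ℝ | y ∈ K ∧ y ∈ Set.Icc x p ∧ apK K g y = y} :=
    NFPL.cpt_gen hKcp g (hScont g hgS) x p (fun a b => b = a)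
      (isClosed_eq continuous_snd continuous_fst)
  have hFhighne : Set.Nonempty {y : ℝ | y ∈ K ∧ y ∈ Set.Icc x p ∧ apK K g y = y} := by
    obtain ⟨z, hzK, hz1, hz2, hz3⟩ := hF1 g hgS (p - x) (by linarith)
    exact ⟨z, hzK, ⟨by linarith, le_of_lt hz2⟩, hz3⟩
  obtain ⟨hb1K, ⟨hxb1, hb1p0⟩, hb1fix⟩ := hFhigh.sInf_mem hFhighne
  set b₁ := sInf {y : ℝ | y ∈ K ∧ y ∈ Set.Icc x p ∧ apK K g y = y} with hb1def
  have hb1p : b₁ < p := by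
    obtain ⟨z, hzK, hz1, hz2, hz3⟩ := hF1 g hgS (p - x) (by linarith)
    have : b₁ ≤ z := csInf_le hFhigh.bddBelow ⟨hzK, ⟨by linarith, le_of_lt hz2⟩, hz3⟩
    exact lt_of_le_of_lt this hz2
  have hxb1' : x < b₁ := lt_of_le_of_ne hxb1 (fun h => hgne' (by rw [← h] at hb1fix; exact hb1fix))
  have hgapg : ∀ t, t ∈ K → a₁ < t → t < b₁ → apK K g t ≠ t := by
    intro t htK h1 h2 hfix
    rcases lt_trichotomy t x with h | h | h
    · have : t ≤ a₁ := le_csSup hFlow.bddAbove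
        ⟨htK, ⟨le_trans hwa1 (le_of_lt h1), le_of_lt h⟩, hfix⟩
      exact absurd h1 (not_lt.mpr this)
    · exact hgne' (h ▸ hfix)
    · have : b₁ ≤ t := csInf_le hFhigh.bddBelow
        ⟨htK, ⟨le_of_lt h, le_trans (le_of_lt h2) (le_of_lt hb1p)⟩, hfix⟩
      exact absurd h2 (not_lt.mpr this)
  have ha1η : p - η ≤ a₁ := le_trans hwη hwa1
  have hmono1 : ∀ x' ∈ K, ∀ y' ∈ K, a₁ ≤ x' → x' < y' → y' ≤ b₁ →
      apK K g x' < apK K g y' := by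
    intro x' hx' y' hy' h1 h2 h3
    exact hSmono g hgS x' hx' y' hy' (le_trans ha1η h1) h2 (le_trans h3 (le_of_lt hb1p))
  have hmonoInv1 : ∀ x' ∈ K, ∀ y' ∈ K, a₁ ≤ x' → x' < y' → y' ≤ b₁ →
      apK K g⁻¹ x' < apK K g⁻¹ y' := by
    intro x' hx' y' hy' h1 h2 h3
    exact hSmono g⁻¹ (hS2 g hgS) x' hx' y' hy' (le_trans ha1η h1) h2
      (le_trans h3 (le_of_lt hb1p))
  have hsgn1 : ∀ t, t ∈ K → a₁ < t → t < b₁ → t < apK K g t :=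
    NFPL.sign_const hKcp g (hScont g hgS) (hScont g⁻¹ (hS2 g hgS)) a₁ b₁ ha1K hb1K
      hmono1 hmonoInv1 ha1fix hb1fix hgapg x hxK ha1x' hxb1' hgx
  exact NFPL.main_chain hKcl hKcp G₁ hcontra Sfin p η (max Wst0 (p - α₀)) hηpos hWstp
    hS1 hS2 hScont hSmono hmove hanchor hF1 hpK hSfix Sfin.card ∅ (Finset.empty_subset _)
    (by simp) g hgS a₁ b₁ ha1K hb1K ha1η (lt_trans ha1x' hxb1') (lt_trans hxWst hxb1')
    hb1p ha1fix hb1fix hsgn1 (fun t ht => absurd ht (Finset.notMem_empty t))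
end

section
/- Let I be an open interval of ℝ which meets K and whose endpoints belong to K, and let G be a subgroup of diff^1(K) such that: (1) every element of G maps I ∩ K onto I ∩ K and is increasing on I; (2) every element of G having a fixed point in I ∩ K restricts to the identity on I ∩ K. Then the group of restrictions to I ∩ K of elements of G is abelian; that is, g(h(x)) = h(g(x)) for all g, h ∈ G and all x ∈ I ∩ K. -/
open Set

section AuxHolder

lemma apK_mem (K : Set ℝ) (f : Equiv.Perm K) {x : ℝ} (hx : x ∈ K) : apK K f x ∈ K := by
  unfold apK; rw [dif_pos hx]; exact (f ⟨x, hx⟩).2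

lemma apK_mul (K : Set ℝ) (f g : Equiv.Perm K) {x : ℝ} (hx : x ∈ K) :
    apK K (f * g) x = apK K f (apK K g x) := by
  have key : ∀ p : K, apK K f ↑p = ↑(f p) := fun p => by
    unfold apK; rw [dif_pos p.2, Subtype.coe_eta]
  have h1 : apK K g x = ↑(g ⟨x, hx⟩) := dif_pos hx
  have h3 : apK K (f * g) x = ↑((f * g) ⟨x, hx⟩) := dif_pos hx
  rw [h1, key, h3]; rfl

lemma apK_one (K : Set ℝ) (x : ℝ) : apK K 1 x = x := by
  unfold apK; split <;> simp

lemma apK_cancel (K : Set ℝ) (f : Equiv.Perm K) {x : ℝ} (hx : x ∈ K) :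
    apK K f⁻¹ (apK K f x) = x := by
  rw [← apK_mul K _ _ hx, inv_mul_cancel, apK_one]

lemma apK_cancel' (K : Set ℝ) (f : Equiv.Perm K) {x : ℝ} (hx : x ∈ K) :
    apK K f (apK K f⁻¹ x) = x := by
  rw [← apK_mul K _ _ hx, mul_inv_cancel, apK_one]

lemma apK_continuousOn (K : Set ℝ) (f : Equiv.Perm K)
    (hc : Continuous fun x : K => f x) : ContinuousOn (apK K f) K := by
  rw [continuousOn_iff_continuous_restrict]
  have : K.domRestrict (apK K f) = fun x : K => ((f x : ℝ)) := by
    funext x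
    simp [apK, Set.domRestrict_apply, x.2]
  rw [this]
  exact continuous_subtype_val.comp hc

lemma apK_pow (K : Set ℝ) (f : Equiv.Perm K) (n : ℕ) {x : ℝ} (hx : x ∈ K) :
    (apK K f)^[n] x = apK K (f ^ n) x := by
  induction n with
  | zero => simp [apK_one]
  | succ n ih =>
    rw [Function.iterate_succ_apply', ih, ← apK_mul K _ _ hx, ← pow_succ']

variable {K : Set ℝ} {a b : ℝ} {f : ℝ → ℝ}


variable {K : Set ℝ} {a b : ℝ} {f : ℝ → ℝ}

/-- IVT-style fixed point lemma on a compact set. -/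
lemma sup_fixed (hKc : IsCompact K)
    (hmap : ∀ x ∈ Ioo a b ∩ K, f x ∈ Ioo a b ∩ K)
    (hmono : ∀ x ∈ Ioo a b ∩ K, ∀ y ∈ Ioo a b ∩ K, x < y → f x < f y)
    (hcont : ContinuousOn f K)
    {u v : ℝ} (hu : u ∈ Ioo a b ∩ K) (hv : v ∈ Ioo a b ∩ K) (huv : u < v)
    (hfu : u < f u) (hfv : f v < v) :
    ∃ w ∈ Ioo a b ∩ K, f w = w := by
  have : CompactSpace K := isCompact_iff_compactSpace.mp hKc
  have hres : Continuous (K.restrict f) := continuousOn_iff_continuous_restrict.mp hcont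
  set T : Set K := {p | (p : ℝ) ∈ Icc u v ∧ (p : ℝ) ≤ f p} with hT
  have hTclosed : IsClosed T := by
    apply IsClosed.inter
    · exact isClosed_Icc.preimage continuous_subtype_val
    · exact isClosed_le continuous_subtype_val hres
  set S : Set ℝ := Subtype.val '' T with hS
  have hScpt : IsCompact S := (hTclosed.isCompact).image continuous_subtype_val
  have hSne : S.Nonempty := ⟨u, ⟨⟨u, hu.2⟩, ⟨⟨le_refl u, huv.le⟩, hfu.le⟩, rfl⟩⟩
  obtain ⟨s, hsS, hsub⟩ := hScpt.exists_isGreatest hSne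
  obtain ⟨⟨s', hs'⟩, hprop, rfl⟩ := hsS
  obtain ⟨⟨hus, hsv⟩, hsf⟩ := hprop
  have hsX : (s' : ℝ) ∈ Ioo a b ∩ K := ⟨⟨lt_of_lt_of_le hu.1.1 hus, lt_of_le_of_lt hsv hv.1.2⟩, hs'⟩
  rcases eq_or_lt_of_le hsf with heq | hlt
  · exact ⟨s', hsX, heq.symm⟩
  · exfalso
    set t := f s' with ht
    have htX : t ∈ Ioo a b ∩ K := hmap _ hsX
    rcases le_or_gt t v with htv | hvt
    · have htS : t ∈ S := ⟨⟨t, htX.2⟩, ⟨⟨le_trans hus hlt.le, htv⟩,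
        le_of_lt (hmono _ hsX _ htX hlt)⟩, rfl⟩
      exact absurd (hsub htS) (not_le.mpr hlt)
    · have hsvlt : s' < v := by
        rcases eq_or_lt_of_le hsv with h | h
        · exfalso; have : v ≤ f v := h ▸ hsf; rw [← h] at hfv; exact absurd (hsf.trans_lt hfv) (lt_irrefl _)
        · exact h
      have := hmono _ hsX _ hv hsvlt
      exact absurd ((this.trans hfv).trans hvt) (lt_irrefl _)

/-- iterates of a forward-moving map escape to the right endpoint. -/
lemma escape_upper (hKc : IsCompact K)
    (hmap : ∀ x ∈ Ioo a b ∩ K, f x ∈ Ioo a b ∩ K)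
    (hcont : ContinuousOn f K)
    (hgt : ∀ x ∈ Ioo a b ∩ K, x < f x)
    {x₀ : ℝ} (hx₀ : x₀ ∈ Ioo a b ∩ K) {y : ℝ} (hy : y < b) :
    ∃ n : ℕ, y < f^[n] x₀ := by
  by_contra hcon
  push_neg at hcon
  set u : ℕ → ℝ := fun n => f^[n] x₀ with hudef
  have humem : ∀ n, u n ∈ Ioo a b ∩ K := by
    intro n; induction n with
    | zero => exact hx₀
    | succ n ih => rw [hudef]; simp only [Function.iterate_succ_apply']; exact hmap _ ih
  have hustep : ∀ n, f (u n) = u (n + 1) := by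
    intro n; rw [hudef]; simp [Function.iterate_succ_apply']
  have humono : StrictMono u := strictMono_nat_of_lt_succ fun n => by
    rw [← hustep n]; exact hgt _ (humem n)
  have hbdd : BddAbove (Set.range u) := ⟨y, by rintro _ ⟨n, rfl⟩; exact hcon n⟩
  set L := ⨆ n, u n with hL
  have htend : Filter.Tendsto u Filter.atTop (nhds L) := tendsto_atTop_ciSup humono.monotone hbdd
  have hLK : L ∈ K := hKc.isClosed.mem_of_tendsto htend
    (Filter.Eventually.of_forall fun n => (humem n).2)
  have hLy : L ≤ y := ciSup_le hcon
  have hLX : L ∈ Ioo a b ∩ K :=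
    ⟨⟨lt_of_lt_of_le (humem 0).1.1 (le_ciSup hbdd 0), lt_of_le_of_lt hLy hy⟩, hLK⟩
  have htendW : Filter.Tendsto u Filter.atTop (nhdsWithin L K) :=
    tendsto_nhdsWithin_of_tendsto_nhds_of_eventually_within u htend
      (Filter.Eventually.of_forall fun n => (humem n).2)
  have h1 : Filter.Tendsto (fun n => f (u n)) Filter.atTop (nhds (f L)) :=
    (hcont L hLK).tendsto.comp htendW
  have h3 : Filter.Tendsto (fun n => u (n + 1)) Filter.atTop (nhds L) :=
    htend.comp (Filter.tendsto_add_atTop_nat 1)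
  have hfix : f L = L := by
    apply tendsto_nhds_unique _ h3
    simpa only [hustep] using h1
  exact absurd hfix (ne_of_gt (hgt L hLX))

/-- iterates of a backward-moving map escape to the left endpoint. -/
lemma escape_lower (hKc : IsCompact K)
    (hmap : ∀ x ∈ Ioo a b ∩ K, f x ∈ Ioo a b ∩ K)
    (hcont : ContinuousOn f K)
    (hlt : ∀ x ∈ Ioo a b ∩ K, f x < x)
    {x₀ : ℝ} (hx₀ : x₀ ∈ Ioo a b ∩ K) {y : ℝ} (hy : a < y) :
    ∃ n : ℕ, f^[n] x₀ < y := by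
  by_contra hcon
  push_neg at hcon
  set u : ℕ → ℝ := fun n => f^[n] x₀ with hudef
  have humem : ∀ n, u n ∈ Ioo a b ∩ K := by
    intro n; induction n with
    | zero => exact hx₀
    | succ n ih => rw [hudef]; simp only [Function.iterate_succ_apply']; exact hmap _ ih
  have hustep : ∀ n, f (u n) = u (n + 1) := by
    intro n; rw [hudef]; simp [Function.iterate_succ_apply']
  have humono : StrictAnti u := strictAnti_nat_of_succ_lt fun n => by
    rw [← hustep n]; exact hlt _ (humem n)
  have hbdd : BddBelow (Set.range u) := ⟨y, by rintro _ ⟨n, rfl⟩; exact hcon n⟩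
  set L := ⨅ n, u n with hL
  have htend : Filter.Tendsto u Filter.atTop (nhds L) := tendsto_atTop_ciInf humono.antitone hbdd
  have hLK : L ∈ K := hKc.isClosed.mem_of_tendsto htend
    (Filter.Eventually.of_forall fun n => (humem n).2)
  have hLy : y ≤ L := le_ciInf hcon
  have hLX : L ∈ Ioo a b ∩ K :=
    ⟨⟨lt_of_lt_of_le hy hLy, lt_of_le_of_lt (ciInf_le hbdd 0) (humem 0).1.2⟩, hLK⟩
  have htendW : Filter.Tendsto u Filter.atTop (nhdsWithin L K) :=
    tendsto_nhdsWithin_of_tendsto_nhds_of_eventually_within u htend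
      (Filter.Eventually.of_forall fun n => (humem n).2)
  have h1 : Filter.Tendsto (fun n => f (u n)) Filter.atTop (nhds (f L)) :=
    (hcont L hLK).tendsto.comp htendW
  have h3 : Filter.Tendsto (fun n => u (n + 1)) Filter.atTop (nhds L) :=
    htend.comp (Filter.tendsto_add_atTop_nat 1)
  have hfix : f L = L := by
    apply tendsto_nhds_unique _ h3
    simpa only [hustep] using h1
  exact absurd hfix (ne_of_lt (hlt L hLX))


end AuxHolder

/-- Hölder-type lemma on an open interval `I` with endpoints in
`K`: if every element of `G` preserves `I ∩ K`, is increasing on `I`, and is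
the identity on `I ∩ K` as soon as it has a fixed point there, then the group
of restrictions to `I ∩ K` is abelian. -/

theorem holder_interval_abelian (K : Set ℝ) (hK : IsCantorInR K)
    (a b : ℝ) (hab : a < b) (ha : a ∈ K) (hb : b ∈ K)
    (hmeet : (Set.Ioo a b ∩ K).Nonempty)
    (G : Subgroup (Equiv.Perm K))
    (hdiff : ∀ g ∈ G, MemDiff1 K g)
    (h1 : ∀ g ∈ G, apK K g '' (Set.Ioo a b ∩ K) = Set.Ioo a b ∩ K ∧
      IncreasingOnK K g (Set.Ioo a b))
    (h2 : ∀ g ∈ G, (∃ x ∈ Set.Ioo a b ∩ K, apK K g x = x) →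
      ∀ x ∈ Set.Ioo a b ∩ K, apK K g x = x) :
    ∀ g ∈ G, ∀ h ∈ G, ∀ x ∈ Set.Ioo a b ∩ K,
      apK K g (apK K h x) = apK K h (apK K g x) := by
  obtain ⟨x₀, hx₀⟩ := hmeet
  have hKc : IsCompact K := hK.2.1
  -- every element of G maps the piece into itself
  have hmap : ∀ g ∈ G, ∀ x ∈ Ioo a b ∩ K, apK K g x ∈ Ioo a b ∩ K := by
    intro g hg x hx
    rw [← (h1 g hg).1]
    exact mem_image_of_mem _ hx
  -- strict monotonicity
  have hmono : ∀ g ∈ G, ∀ x ∈ Ioo a b ∩ K, ∀ y ∈ Ioo a b ∩ K, x < y →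
      apK K g x < apK K g y := by
    intro g hg x hx y hy hxy
    obtain ⟨F, F', hmonoF, _, _, hFeq⟩ := (h1 g hg).2
    rw [← hFeq x hx.1 hx.2, ← hFeq y hy.1 hy.2]
    exact hmonoF hx.1 hy.1 hxy
  have hmono' : ∀ g ∈ G, ∀ x ∈ Ioo a b ∩ K, ∀ y ∈ Ioo a b ∩ K, x ≤ y →
      apK K g x ≤ apK K g y := by
    intro g hg x hx y hy hxy
    rcases eq_or_lt_of_le hxy with rfl | h
    · exact le_refl _
    · exact (hmono g hg x hx y hy h).le
  have hcont : ∀ g ∈ G, ContinuousOn (apK K g) K :=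
    fun g hg => apK_continuousOn K g (hdiff g hg).1
  -- positivity at the base point propagates
  have hposprop : ∀ k ∈ G, x₀ < apK K k x₀ → ∀ x ∈ Ioo a b ∩ K, x < apK K k x := by
    intro k hk hpos x hx
    by_contra hc
    push_neg at hc
    rcases eq_or_lt_of_le hc with heq | hlt
    · exact absurd (h2 k hk ⟨x, hx, heq⟩ x₀ hx₀) (ne_of_gt hpos)
    · have hfix : ∃ w ∈ Ioo a b ∩ K, apK K k w = w := by
        rcases lt_trichotomy x₀ x with hxx | hxx | hxx
        · exact sup_fixed hKc (hmap k hk) (hmono k hk) (hcont k hk) hx₀ hx hxx hpos hlt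
        · rw [← hxx] at hlt; exact absurd (hpos.trans hlt) (lt_irrefl _)
        · have hkinv : k⁻¹ ∈ G := inv_mem hk
          have hu : apK K k x ∈ Ioo a b ∩ K := hmap k hk x hx
          have hv : apK K k x₀ ∈ Ioo a b ∩ K := hmap k hk x₀ hx₀
          have huv : apK K k x < apK K k x₀ := hmono k hk x hx x₀ hx₀ hxx
          have hu1 : apK K k x < apK K k⁻¹ (apK K k x) := by
            rw [apK_cancel K k hx.2]; exact hlt
          have hv1 : apK K k⁻¹ (apK K k x₀) < apK K k x₀ := by
            rw [apK_cancel K k hx₀.2]; exact hpos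
          obtain ⟨w, hw, hwfix⟩ := sup_fixed hKc (hmap k⁻¹ hkinv) (hmono k⁻¹ hkinv)
            (hcont k⁻¹ hkinv) hu hv huv hu1 hv1
          refine ⟨w, hw, ?_⟩
          conv_lhs => rw [← hwfix]
          exact apK_cancel' K k hw.2
      obtain ⟨w, hw, hwfix⟩ := hfix
      exact absurd (h2 k hk ⟨w, hw, hwfix⟩ x₀ hx₀) (ne_of_gt hpos)
  -- ≤ at the base point propagates
  have hle_prop : ∀ g ∈ G, ∀ k ∈ G, apK K g x₀ ≤ apK K k x₀ →
      ∀ x ∈ Ioo a b ∩ K, apK K g x ≤ apK K k x := by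
    intro g hg k hk hle x hx
    have hwG : g⁻¹ * k ∈ G := mul_mem (inv_mem hg) hk
    have hgw : ∀ z ∈ K, apK K g (apK K (g⁻¹ * k) z) = apK K k z := by
      intro z hz
      rw [← apK_mul K _ _ hz, ← mul_assoc, mul_inv_cancel, one_mul]
    have hw0 : x₀ ≤ apK K (g⁻¹ * k) x₀ := by
      by_contra hcc
      push_neg at hcc
      have := hmono g hg _ (hmap _ hwG _ hx₀) _ hx₀ hcc
      rw [hgw x₀ hx₀.2] at this
      exact absurd hle (not_le.mpr this)
    rcases eq_or_lt_of_le hw0 with heq | hlt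
    · have hid := h2 _ hwG ⟨x₀, hx₀, heq.symm⟩
      have e : apK K g x = apK K k x := by
        conv_lhs => rw [← hid x hx]
        exact hgw x hx.2
      exact e.le
    · have hall := hposprop _ hwG hlt x hx
      have := hmono g hg x hx _ (hmap _ hwG x hx) hall
      rw [hgw x hx.2] at this
      exact this.le
  -- < at the base point propagates
  have hlt_prop : ∀ g ∈ G, ∀ k ∈ G, apK K g x₀ < apK K k x₀ →
      ∀ x ∈ Ioo a b ∩ K, apK K g x < apK K k x := by
    intro g hg k hk hlt x hx
    have hwG : g⁻¹ * k ∈ G := mul_mem (inv_mem hg) hk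
    have hgw : ∀ z ∈ K, apK K g (apK K (g⁻¹ * k) z) = apK K k z := by
      intro z hz
      rw [← apK_mul K _ _ hz, ← mul_assoc, mul_inv_cancel, one_mul]
    have hw0 : x₀ < apK K (g⁻¹ * k) x₀ := by
      by_contra hcc
      push_neg at hcc
      have := hmono' g hg _ (hmap _ hwG _ hx₀) _ hx₀ hcc
      rw [hgw x₀ hx₀.2] at this
      exact absurd hlt (not_lt.mpr this)
    have hall := hposprop _ hwG hw0 x hx
    have := hmono g hg x hx _ (hmap _ hwG x hx) hall
    rwa [hgw x hx.2] at this
  -- archimedean bracketing by powers of a positive element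
  have hbracket : ∀ k ∈ G, x₀ < apK K k x₀ → ∀ y ∈ Ioo a b ∩ K,
      ∃ p : ℤ, apK K (k ^ p) x₀ ≤ y ∧ y < apK K (k ^ (p + 1)) x₀ := by
    intro k hk hpos y hy
    have hgt := hposprop k hk hpos
    have hkinv : k⁻¹ ∈ G := inv_mem hk
    have hltall : ∀ x ∈ Ioo a b ∩ K, apK K k⁻¹ x < x := by
      intro x hx
      have := hgt _ (hmap k⁻¹ hkinv x hx)
      rwa [apK_cancel' K k hx.2] at this
    have hsmem : ∀ p : ℤ, apK K (k ^ p) x₀ ∈ Ioo a b ∩ K :=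
      fun p => hmap _ (zpow_mem hk p) x₀ hx₀
    have hsmono : StrictMono (fun p : ℤ => apK K (k ^ p) x₀) := by
      apply strictMono_int_of_lt_succ
      intro p
      have e : k ^ (p + 1) = k * k ^ p := by group
      simp only [e, apK_mul K _ _ hx₀.2]
      exact hgt _ (hsmem p)
    obtain ⟨n₁, hn₁⟩ := escape_upper hKc (hmap k hk) (hcont k hk) hgt hx₀ hy.1.2
    rw [apK_pow K k n₁ hx₀.2] at hn₁
    have hn₁' : y < apK K (k ^ (n₁ : ℤ)) x₀ := by rwa [zpow_natCast]
    obtain ⟨n₂, hn₂⟩ := escape_lower hKc (hmap k⁻¹ hkinv) (hcont k⁻¹ hkinv) hltall hx₀ hy.1.1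
    rw [apK_pow K k⁻¹ n₂ hx₀.2] at hn₂
    have hn₂' : apK K (k ^ (-(n₂ : ℤ))) x₀ < y := by
      have e : k ^ (-(n₂ : ℤ)) = k⁻¹ ^ n₂ := by
        rw [zpow_neg, zpow_natCast, inv_pow]
      rwa [e]
    have hbd : ∃ ub : ℤ, (apK K (k ^ ub) x₀ ≤ y) ∧
        ∀ z : ℤ, apK K (k ^ z) x₀ ≤ y → z ≤ ub := by
      apply Int.exists_greatest_of_bdd
      · refine ⟨n₁, fun z hz => ?_⟩
        exact (hsmono.lt_iff_lt.mp (lt_of_le_of_lt hz hn₁')).le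
      · exact ⟨-(n₂ : ℤ), hn₂'.le⟩
    obtain ⟨p, hp, hpmax⟩ := hbd
    refine ⟨p, hp, ?_⟩
    by_contra hcp
    push_neg at hcp
    have := hpmax _ hcp
    omega
  -- the key commutator lemma
  have M : ∀ A ∈ G, ∀ B ∈ G, ¬ (x₀ < apK K (A⁻¹ * B⁻¹ * A * B) x₀) := by
    intro A hA B hB hposc
    obtain ⟨c, hcdef⟩ : ∃ c, c = A⁻¹ * B⁻¹ * A * B := ⟨_, rfl⟩
    rw [← hcdef] at hposc
    have hcG : c ∈ G := by
      rw [hcdef]; exact mul_mem (mul_mem (mul_mem (inv_mem hA) (inv_mem hB)) hA) hB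
    have hγX : apK K c x₀ ∈ Ioo a b ∩ K := hmap c hcG x₀ hx₀
    by_cases hsm : ∃ h₀ ∈ G, x₀ < apK K h₀ x₀ ∧ apK K h₀ x₀ < apK K c x₀
    · -- there is a small positive element: derive a contradiction
      obtain ⟨h₀, hh₀, hpos₀, hlt₀⟩ := hsm
      have hhh : ∃ h ∈ G, x₀ < apK K h x₀ ∧ apK K (h * h) x₀ ≤ apK K c x₀ := by
        by_cases hcase : apK K (h₀ * h₀) x₀ ≤ apK K c x₀
        · exact ⟨h₀, hh₀, hpos₀, hcase⟩
        · push_neg at hcase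
          have hstr := hlt_prop _ hcG _ (mul_mem hh₀ hh₀) hcase
          have hinvh₀ : h₀⁻¹ ∈ G := inv_mem hh₀
          refine ⟨h₀⁻¹ * c, mul_mem hinvh₀ hcG, ?_, ?_⟩
          · rw [apK_mul K _ _ hx₀.2]
            have := hmono h₀⁻¹ hinvh₀ _ (hmap h₀ hh₀ x₀ hx₀) _ hγX hlt₀
            rwa [apK_cancel K h₀ hx₀.2] at this
          · have hyyX : apK K h₀⁻¹ (apK K c x₀) ∈ Ioo a b ∩ K := hmap h₀⁻¹ hinvh₀ _ hγX
            have key : apK K c (apK K h₀⁻¹ (apK K c x₀)) < apK K h₀ (apK K c x₀) := by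
              have hs := hstr _ hyyX
              rw [apK_mul K _ _ hyyX.2] at hs
              rw [apK_cancel' K h₀ hγX.2] at hs
              exact hs
            have key2 : apK K h₀⁻¹ (apK K c (apK K h₀⁻¹ (apK K c x₀))) < apK K c x₀ := by
              have := hmono h₀⁻¹ hinvh₀ _ (hmap c hcG _ hyyX) _ (hmap h₀ hh₀ _ hγX) key
              rwa [apK_cancel K h₀ hγX.2] at this
            have e : apK K ((h₀⁻¹ * c) * (h₀⁻¹ * c)) x₀
                = apK K h₀⁻¹ (apK K c (apK K h₀⁻¹ (apK K c x₀))) := by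
              rw [apK_mul K _ _ hx₀.2, apK_mul K _ _ hx₀.2, apK_mul K _ _ hyyX.2]
            rw [e]
            exact key2.le
      obtain ⟨h, hh, hposh, hsq⟩ := hhh
      obtain ⟨p, hpA1, hpA2⟩ := hbracket h hh hposh _ (hmap A hA x₀ hx₀)
      obtain ⟨q, hqB1, hqB2⟩ := hbracket h hh hposh _ (hmap B hB x₀ hx₀)
      have hA1 := hle_prop _ (zpow_mem hh p) _ hA hpA1
      have hA2 := hlt_prop _ hA _ (zpow_mem hh (p + 1)) hpA2
      have hB1 := hle_prop _ (zpow_mem hh q) _ hB hqB1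
      have hB2 := hlt_prop _ hB _ (zpow_mem hh (q + 1)) hqB2
      have hβX : apK K B x₀ ∈ Ioo a b ∩ K := hmap B hB x₀ hx₀
      have hq1X : apK K (h ^ (q + 1)) x₀ ∈ Ioo a b ∩ K := hmap _ (zpow_mem hh (q + 1)) x₀ hx₀
      have hhhX : apK K (h * h) x₀ ∈ Ioo a b ∩ K := hmap _ (mul_mem hh hh) x₀ hx₀
      have c1 : apK K A (apK K B x₀) < apK K (h ^ (p + 1)) (apK K B x₀) := hA2 _ hβX
      have c2 : apK K (h ^ (p + 1)) (apK K B x₀)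
          < apK K (h ^ (p + 1)) (apK K (h ^ (q + 1)) x₀) :=
        hmono _ (zpow_mem hh (p + 1)) _ hβX _ hq1X (hB2 x₀ hx₀)
      have c3 : apK K (h ^ (p + 1)) (apK K (h ^ (q + 1)) x₀)
          = apK K (h ^ (p + q)) (apK K (h * h) x₀) := by
        rw [← apK_mul K _ _ hx₀.2, ← apK_mul K _ _ hx₀.2]
        congr 1
        group
      have c4 : apK K (h ^ (p + q)) (apK K c x₀) ≤ apK K B (apK K A (apK K c x₀)) := by
        have e1 : apK K (h ^ (p + q)) (apK K c x₀)
            = apK K (h ^ q) (apK K (h ^ p) (apK K c x₀)) := by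
          rw [← apK_mul K _ _ hγX.2]
          congr 1
          group
        rw [e1]
        calc apK K (h ^ q) (apK K (h ^ p) (apK K c x₀))
            ≤ apK K (h ^ q) (apK K A (apK K c x₀)) :=
              hmono' _ (zpow_mem hh q) _ (hmap _ (zpow_mem hh p) _ hγX)
                _ (hmap A hA _ hγX) (hA1 _ hγX)
          _ ≤ apK K B (apK K A (apK K c x₀)) := hB1 _ (hmap A hA _ hγX)
      have c5 : apK K B (apK K A (apK K c x₀)) = apK K A (apK K B x₀) := by
        rw [← apK_mul K _ _ hγX.2, ← apK_mul K _ _ hx₀.2, ← apK_mul K _ _ hx₀.2]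
        congr 1
        rw [hcdef]
        group
      have c6 : apK K (h ^ (p + q)) (apK K c x₀)
          < apK K (h ^ (p + q)) (apK K (h * h) x₀) := by
        rw [← c3]
        calc apK K (h ^ (p + q)) (apK K c x₀) ≤ apK K A (apK K B x₀) := by
              rw [← c5]; exact c4
          _ < apK K (h ^ (p + 1)) (apK K B x₀) := c1
          _ < apK K (h ^ (p + 1)) (apK K (h ^ (q + 1)) x₀) := c2
      have c7 : apK K c x₀ < apK K (h * h) x₀ := by
        by_contra hcc
        push_neg at hcc
        have := hmono' _ (zpow_mem hh (p + q)) _ hhhX _ hγX hcc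
        exact absurd c6 (not_lt.mpr this)
      exact absurd hsq (not_le.mpr c7)
    · -- c is a least positive element: A and B act like powers of c
      push_neg at hsm
      have hrep : ∀ D ∈ G, ∃ r : ℤ, ∀ x ∈ Ioo a b ∩ K, apK K D x = apK K (c ^ r) x := by
        intro D hD
        obtain ⟨p, hp1, hp2⟩ := hbracket c hcG hposc _ (hmap D hD x₀ hx₀)
        have hcpG : (c ^ p)⁻¹ ∈ G := inv_mem (zpow_mem hcG p)
        have hwG : (c ^ p)⁻¹ * D ∈ G := mul_mem hcpG hD
        have hwx : apK K ((c ^ p)⁻¹ * D) x₀ = apK K (c ^ p)⁻¹ (apK K D x₀) :=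
          apK_mul K _ _ hx₀.2
        have hw1 : x₀ ≤ apK K ((c ^ p)⁻¹ * D) x₀ := by
          rw [hwx]
          have := hmono' _ hcpG _ (hmap _ (zpow_mem hcG p) x₀ hx₀) _ (hmap D hD x₀ hx₀) hp1
          rwa [apK_cancel K (c ^ p) hx₀.2] at this
        have hw2 : apK K ((c ^ p)⁻¹ * D) x₀ < apK K c x₀ := by
          rw [hwx]
          have := hmono _ hcpG _ (hmap D hD x₀ hx₀) _ (hmap _ (zpow_mem hcG (p + 1)) x₀ hx₀) hp2
          have e2 : apK K (c ^ p)⁻¹ (apK K (c ^ (p + 1)) x₀) = apK K c x₀ := by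
            rw [← apK_mul K _ _ hx₀.2]
            congr 1
            group
          rwa [e2] at this
        rcases eq_or_lt_of_le hw1 with heq | hltw
        · have hid := h2 _ hwG ⟨x₀, hx₀, heq.symm⟩
          refine ⟨p, fun x hx => ?_⟩
          have e : apK K (c ^ p) (apK K ((c ^ p)⁻¹ * D) x) = apK K D x := by
            rw [← apK_mul K _ _ hx.2]
            congr 1
            group
          rw [← e, hid x hx]
        · exact absurd (hsm _ hwG hltw) (not_le.mpr hw2)
      obtain ⟨p, hAp⟩ := hrep A hA
      obtain ⟨q, hBq⟩ := hrep B hB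
      have hAB : apK K (A * B) x₀ = apK K (B * A) x₀ := by
        rw [apK_mul K _ _ hx₀.2, apK_mul K _ _ hx₀.2,
          hBq x₀ hx₀, hAp _ (hmap _ (zpow_mem hcG q) x₀ hx₀),
          hAp x₀ hx₀, hBq _ (hmap _ (zpow_mem hcG p) x₀ hx₀),
          ← apK_mul K _ _ hx₀.2, ← apK_mul K _ _ hx₀.2]
        congr 1
        group
      have hfixc : apK K c x₀ = x₀ := by
        have e : apK K (B * A) (apK K c x₀) = apK K (B * A) x₀ := by
          rw [← apK_mul K _ _ hx₀.2]
          have e2 : B * A * c = A * B := by rw [hcdef]; group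
          rw [e2]
          exact hAB
        have := congrArg (apK K (B * A)⁻¹) e
        rwa [apK_cancel K (B * A) (apK_mem K c hx₀.2), apK_cancel K (B * A) hx₀.2] at this
      exact absurd hfixc (ne_of_gt hposc)
  -- conclusion
  intro g hg h hh x hx
  have heG : g⁻¹ * h⁻¹ * g * h ∈ G :=
    mul_mem (mul_mem (mul_mem (inv_mem hg) (inv_mem hh)) hg) hh
  rcases lt_trichotomy (apK K (g⁻¹ * h⁻¹ * g * h) x₀) x₀ with hlt | heq | hgt
  · exfalso
    have heX : apK K (g⁻¹ * h⁻¹ * g * h) x₀ ∈ Ioo a b ∩ K := hmap _ heG x₀ hx₀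
    have hinvG : (g⁻¹ * h⁻¹ * g * h)⁻¹ ∈ G := inv_mem heG
    have : x₀ < apK K (g⁻¹ * h⁻¹ * g * h)⁻¹ x₀ := by
      have := hmono _ hinvG _ heX _ hx₀ hlt
      rwa [apK_cancel K _ hx₀.2] at this
    have e : (g⁻¹ * h⁻¹ * g * h)⁻¹ = h⁻¹ * g⁻¹ * h * g := by group
    rw [e] at this
    exact M h hh g hg this
  · have hid := h2 _ heG ⟨x₀, hx₀, heq⟩
    calc apK K g (apK K h x) = apK K (g * h) x := (apK_mul K _ _ hx.2).symm
      _ = apK K ((h * g) * (g⁻¹ * h⁻¹ * g * h)) x := by congr 1; group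
      _ = apK K (h * g) (apK K (g⁻¹ * h⁻¹ * g * h) x) := apK_mul K _ _ hx.2
      _ = apK K (h * g) x := by rw [hid x hx]
      _ = apK K h (apK K g x) := apK_mul K _ _ hx.2
  · exact absurd hgt (M g hg h hh)
end

section
/- Let p' < p be points of K with p accumulated on the left by points of K, and let f, h ∈ diff^1(K) satisfy: (1) f is increasing on [p', p], f(p) = p, and f(x) > x for all x ∈ [p', p) ∩ K; (2) there exists a point p* ∈ (p', p) ∩ K such that h(f^n(p*)) = f^n(p*) for all n ≥ 0; (3) there exist a point p0 ∈ [p', p*) ∩ K and an integer N > 0 such that h(p0) ≠ p0 and h(f^n(p0)) = f^n(p0) for all n ≥ N. Then there exists an integer N' > 0 such that the subsemigroup generated by f^{N'} and f^{N'} ∘ h is free on these two generators. -/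
open Set

/-- Auxiliary: the correction term in the normal form of a positive word
in `f ^ N` and `f ^ N * h`: a product of conjugates of `h`. -/
def wordC {K : Set ℝ} (f h : Equiv.Perm K) (N : ℕ) : List Bool → Equiv.Perm K
  | [] => 1
  | x :: t => (if x then 1 else (f ^ (t.length * N))⁻¹ * h * f ^ (t.length * N))
      * wordC f h N t

/-- The free-subsemigroup criterion (Lemma on `f`, `h` and the
points `p₀`, `p*`). -/
theorem semifree_criterion (K : Set ℝ) (hK : IsCantorInR K)
    (p' p : ℝ) (hp' : p' ∈ K) (hp : p ∈ K) (hlt : p' < p)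
    (hacc : AccLeft p K)
    (f h : Equiv.Perm K) (hf : MemDiff1 K f) (hh : MemDiff1 K h)
    (h1a : IncreasingOnK K f (Set.Icc p' p))
    (h1b : apK K f p = p)
    (h1c : ∀ x ∈ Set.Ico p' p ∩ K, x < apK K f x)
    (pstar : ℝ) (hpstar : pstar ∈ Set.Ioo p' p ∩ K)
    (h2 : ∀ n : ℕ, apK K h (apK K (f ^ n) pstar) = apK K (f ^ n) pstar)
    (p₀ : ℝ) (hp₀ : p₀ ∈ Set.Ico p' pstar ∩ K)
    (N : ℕ) (hN : 0 < N)
    (h3a : apK K h p₀ ≠ p₀)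
    (h3b : ∀ n : ℕ, N ≤ n → apK K h (apK K (f ^ n) p₀) = apK K (f ^ n) p₀) :
    ∃ N' : ℕ, 0 < N' ∧ IsFreePair (f ^ N') (f ^ N' * h) := by
  classical
  have apK_coe : ∀ (g : Equiv.Perm K) (x : K), apK K g ↑x = ↑(g x) := by
    intro g x
    simp [apK]
  have hp₀K : p₀ ∈ K := hp₀.2
  set P : K := ⟨p₀, hp₀K⟩ with hPdef
  set r : ℕ → K := fun n => (f ^ n) P with hrdef
  have hr0 : (r 0 : ℝ) = p₀ := by simp [hrdef, hPdef]
  have hr_succ : ∀ n, r (n + 1) = f (r n) := by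
    intro n
    simp [hrdef, pow_succ', Equiv.Perm.mul_apply]
  have apK_pow : ∀ n, apK K (f ^ n) p₀ = ↑(r n) := fun n => apK_coe (f ^ n) P
  -- h fixes the tail orbit of p₀
  have hfix : ∀ n, N ≤ n → h (r n) = r n := by
    intro n hn
    have := h3b n hn
    rw [apK_pow, apK_coe] at this
    exact Subtype.coe_injective this
  have hPne : h P ≠ P := by
    intro hcon
    apply h3a
    have : apK K h p₀ = ↑(h P) := apK_coe h P
    rw [this, hcon]
  -- the orbit of p₀ stays in [p', p) and is strictly increasing
  have hmem : ∀ n, (r n : ℝ) ∈ Set.Ico p' p := by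
    intro n
    induction n with
    | zero => exact ⟨hr0 ▸ hp₀.1.1, hr0 ▸ lt_trans hp₀.1.2 hpstar.1.2⟩
    | succ n ih =>
      obtain ⟨F, F', hmono, _, _, hFK⟩ := h1a
      have hKn : (r n : ℝ) ∈ K := (r n).2
      have hlt1 : (r n : ℝ) < apK K f (r n) := h1c _ ⟨ih, hKn⟩
      have hval : apK K f ↑(r n) = ↑(r (n + 1)) := by
        rw [apK_coe, hr_succ]
      constructor
      · exact le_trans ih.1 (le_of_lt (hval ▸ hlt1))
      · have h1 : F ↑(r n) = apK K f ↑(r n) :=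
          hFK _ ⟨ih.1, le_of_lt ih.2⟩ hKn
        have h2' : F p = p := by
          rw [hFK p ⟨le_of_lt hlt, le_refl p⟩ hp, h1b]
        have := hmono (a := (r n : ℝ)) (b := p) ⟨ih.1, le_of_lt ih.2⟩
          ⟨le_of_lt hlt, le_refl p⟩ ih.2
        rw [h1, h2', hval] at this
        exact this
  have rmono : StrictMono (fun n => (r n : ℝ)) := by
    apply strictMono_nat_of_lt_succ
    intro n
    have := h1c _ ⟨hmem n, (r n).2⟩
    rwa [apK_coe, ← hr_succ] at this
  have rinj : ∀ m n, r m = r n → m = n := by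
    intro m n hmn
    exact rmono.injective (congrArg _ hmn)
  refine ⟨N, hN, ?_⟩
  intro w₁ w₂ hne₁ hne₂ heq
  set φ : Bool → Equiv.Perm K := fun t => if t then f ^ N else f ^ N * h with hφdef
  -- Fact 1: action of a word on tail orbit points
  have fact1 : ∀ (w : List Bool) (n : ℕ), N ≤ n →
      ((w.map φ).prod) (r n) = r (n + w.length * N) := by
    intro w
    induction w with
    | nil => intro n _; simp
    | cons x t ih =>
      intro n hn
      have hm : N ≤ n + t.length * N := le_trans hn (Nat.le_add_right _ _)
      have step : ∀ m, N ≤ m → (f ^ N) (r m) = r (m + N) := by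
        intro m _
        show (f ^ N) ((f ^ m) P) = (f ^ (m + N)) P
        rw [add_comm m N, pow_add, Equiv.Perm.mul_apply]
      have harith : n + (x :: t).length * N = (n + t.length * N) + N := by
        simp [List.length_cons]; ring
      rw [List.map_cons, List.prod_cons, Equiv.Perm.mul_apply, ih n hn, harith]
      cases x with
      | true => simpa [hφdef] using step _ hm
      | false =>
        have : φ false = f ^ N * h := by simp [hφdef]
        rw [this, Equiv.Perm.mul_apply, hfix _ hm]
        exact step _ hm
  -- words of equal product have equal length
  have lenEq : w₁.length = w₂.length := by
    have e1 := fact1 w₁ N le_rfl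
    have e2 := fact1 w₂ N le_rfl
    rw [heq] at e1
    have := rinj _ _ (e1.symm.trans e2)
    have hNN : w₁.length * N = w₂.length * N := by omega
    exact Nat.eq_of_mul_eq_mul_right hN hNN
  -- conjugates of h fix P
  have gfix : ∀ j, 1 ≤ j →
      ((f ^ (j * N))⁻¹ * h * f ^ (j * N)) P = P := by
    intro j hj
    have hjN : N ≤ j * N := Nat.le_mul_of_pos_left N hj
    have : (f ^ (j * N)) P = r (j * N) := rfl
    rw [Equiv.Perm.mul_apply, Equiv.Perm.mul_apply, this, hfix _ hjN, ← this,
      Equiv.Perm.inv_def, Equiv.symm_apply_apply]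
  -- the normal form decomposition
  have decomp : ∀ w : List Bool,
      (w.map φ).prod = f ^ (w.length * N) * wordC f h N w := by
    intro w
    induction w with
    | nil => simp [wordC]
    | cons x t ih =>
      rw [List.map_cons, List.prod_cons, ih, wordC, ← mul_assoc, ← mul_assoc]
      congr 1
      have harith : (x :: t).length * N = N + t.length * N := by
        simp [List.length_cons]; ring
      rw [harith, pow_add]
      cases x with
      | true => simp [hφdef]
      | false =>
        have : φ false = f ^ N * h := by simp [hφdef]
        rw [this, if_neg Bool.false_ne_true]
        group
  -- words ending (rightmost) in `true` fix P
  have cfixT : ∀ u : List Bool, wordC f h N (u ++ [true]) P = P := by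
    intro u
    induction u with
    | nil => simp [wordC]
    | cons x u ih =>
      rw [List.cons_append, wordC, Equiv.Perm.mul_apply, ih]
      cases x with
      | true => simp
      | false =>
        simpa using gfix ((u ++ [true]).length) (by simp)
  -- words ending in `false` split as D * h with D fixing P
  have cF : ∀ v : List Bool, ∃ D : Equiv.Perm K,
      wordC f h N (v ++ [false]) = D * h ∧ D P = P := by
    intro v
    induction v with
    | nil =>
      refine ⟨1, ?_, rfl⟩
      simp [wordC]
    | cons x v ih =>
      obtain ⟨D, hD, hDP⟩ := ih
      refine ⟨(if x then 1 else (f ^ ((v ++ [false]).length * N))⁻¹ * h *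
          f ^ ((v ++ [false]).length * N)) * D, ?_, ?_⟩
      · rw [List.cons_append, wordC, hD]
        cases x
        · rw [if_neg Bool.false_ne_true]
          group
        · simp
      · rw [Equiv.Perm.mul_apply, hDP]
        cases x with
        | true => simp
        | false => simpa using gfix ((v ++ [false]).length) (by simp)
  -- the key contradiction when last letters differ
  have key : ∀ u v : List Bool, u.length = v.length →
      ((u ++ [true]).map φ).prod = ((v ++ [false]).map φ).prod → False := by
    intro u v hlen hequv
    rw [decomp, decomp] at hequv
    have hlen2 : (u ++ [true]).length = (v ++ [false]).length := by
      simp [hlen]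
    rw [hlen2] at hequv
    have hC : wordC f h N (u ++ [true]) = wordC f h N (v ++ [false]) :=
      mul_left_cancel hequv
    obtain ⟨D, hD, hDP⟩ := cF v
    have : P = D (h P) := by
      rw [← Equiv.Perm.mul_apply, ← hD, ← hC, cfixT]
    have : h P = P := by
      apply D.injective
      rw [← this, hDP]
    exact hPne this
  -- main induction on (equal) length
  have main : ∀ k (u v : List Bool), u.length = k → v.length = k →
      (u.map φ).prod = (v.map φ).prod → u = v := by
    intro k
    induction k with
    | zero =>
      intro u v hu hv _
      rw [List.length_eq_zero_iff.mp hu, List.length_eq_zero_iff.mp hv]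
    | succ k ih =>
      intro u v hu hv hequv
      obtain ⟨u', x, rfl⟩ : ∃ u' x, u = u' ++ [x] := by
        rcases List.eq_nil_or_concat u with rfl | ⟨u', x, hx⟩
        · simp at hu
        · exact ⟨u', x, by simpa [List.concat_eq_append] using hx⟩
      obtain ⟨v', y, rfl⟩ : ∃ v' y, v = v' ++ [y] := by
        rcases List.eq_nil_or_concat v with rfl | ⟨v', y, hy⟩
        · simp at hv
        · exact ⟨v', y, by simpa [List.concat_eq_append] using hy⟩
      have hu' : u'.length = k := by simpa using hu
      have hv' : v'.length = k := by simpa using hv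
      have hsplit : ∀ (w : List Bool) (z : Bool),
          ((w ++ [z]).map φ).prod = (w.map φ).prod * φ z := by
        intro w z; simp
      rw [hsplit, hsplit] at hequv
      by_cases hxy : x = y
      · subst hxy
        have : (u'.map φ).prod = (v'.map φ).prod := mul_right_cancel hequv
        rw [ih u' v' hu' hv' this]
      · exfalso
        cases x with
        | true =>
          have hy : y = false := by
            cases y
            · rfl
            · exact absurd rfl hxy
          subst hy
          exact key u' v' (hu'.trans hv'.symm) (by rw [hsplit, hsplit]; exact hequv)
        | false =>
          have hy : y = true := by
            cases y
            · exact absurd rfl hxy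
            · rfl
          subst hy
          exact key v' u' (hv'.trans hu'.symm) (by rw [hsplit, hsplit]; exact hequv.symm)
  exact main w₁.length w₁ w₂ rfl lenEq.symm heq
end
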